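/- For a finite connected simple graph Y with n vertices, the evaluations of the Tutte polynomial satisfy n·T_Y(1,0) ≤ T_Y(2,0). -/

import Mathlib

namespace AcycPaper

variable {V : Type*}

/-- `r` is an orientation of the graph `Y`: exactly one direction per edge. -/
def IsOrientation (Y : SimpleGraph V) (r : V → V → Prop) : Prop :=
  (∀ i j, Y.Adj i j ↔ (r i j ∨ r j i)) ∧ ∀ i j, r i j → ¬ r j i

/-- A relation is acyclic if it has no directed cycles. -/
def IsAcyclicRel (r : V → V → Prop) : Prop := ∀ v, ¬ Relation.TransGen r v v

/-- The set of acyclic orientations of `Y`. -/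
def Acyc (Y : SimpleGraph V) : Set (V → V → Prop) :=
  {r | IsOrientation Y r ∧ IsAcyclicRel r}

/-- `v` is a source: no edge points into `v`. -/
def IsSource (r : V → V → Prop) (v : V) : Prop := ∀ j, ¬ r j v

open Classical in
/-- Click (source-to-sink move) at `v`: reverse all edges incident to `v`. -/
def click (r : V → V → Prop) (v : V) : V → V → Prop :=
  fun i j => if v = i ∨ v = j then r j i else r i j

/-- One click step between acyclic orientations. -/
def ClickStep (Y : SimpleGraph V) (r r' : V → V → Prop) : Prop :=
  r ∈ Acyc Y ∧ ∃ v, IsSource r v ∧ r' = click r v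

/-- κ-equivalence: the equivalence relation generated by clicks. -/
def KEquiv (Y : SimpleGraph V) : (V → V → Prop) → (V → V → Prop) → Prop :=
  Relation.EqvGen (ClickStep Y)

/-- The set of κ-equivalence classes of acyclic orientations. -/
def KQuot (Y : SimpleGraph V) := Quot (fun a b : Acyc Y => ClickStep Y a.1 b.1)

/-- κ(Y): number of κ-equivalence classes. -/
noncomputable def kappa (Y : SimpleGraph V) : ℕ := Nat.card (KQuot Y)

/-- α(Y): number of acyclic orientations. -/
noncomputable def alpha (Y : SimpleGraph V) : ℕ := Nat.card (Acyc Y)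

/-- The rank of an edge set A over the vertex type V:
|V| minus the number of connected components of the spanning subgraph (V, A). -/
noncomputable def graphRank {V : Type*} [Fintype V] (A : Set (Sym2 V)) : ℕ :=
  Fintype.card V - Nat.card (SimpleGraph.fromEdgeSet A).ConnectedComponent

/-- The Tutte polynomial of Y evaluated at (x, y), via the Whitney rank
expansion T_Y(x,y) = ∑_{A ⊆ E} (x-1)^{r(E)-r(A)} (y-1)^{|A|-r(A)}. -/
noncomputable def tutte {V : Type*} [Fintype V] [DecidableEq V]
    (Y : SimpleGraph V) [DecidableRel Y.Adj] (x y : ℤ) : ℤ :=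
  ∑ A ∈ Y.edgeFinset.powerset,
    (x - 1) ^ (graphRank Y.edgeSet - graphRank (↑A : Set (Sym2 V))) *
      (y - 1) ^ (A.card - graphRank (↑A : Set (Sym2 V)))



/-! ### Auxiliary machinery -/

open SimpleGraph Relation Finset





/-- number of connected components of the spanning subgraph (V, A) -/
noncomputable def nc (A : Set (Sym2 V)) : ℕ :=
  Nat.card (SimpleGraph.fromEdgeSet A).ConnectedComponent

lemma cc_finite [Finite V] (G : SimpleGraph V) : Finite G.ConnectedComponent :=
  Finite.of_surjective G.connectedComponentMk Quot.exists_rep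

lemma nc_le_card [Fintype V] (A : Set (Sym2 V)) : nc A ≤ Fintype.card V := by
  rw [nc, ← Nat.card_eq_fintype_card]
  exact Nat.card_le_card_of_surjective _ Quot.exists_rep

lemma one_le_nc [Finite V] [Nonempty V] (A : Set (Sym2 V)) : 1 ≤ nc A := by
  have := cc_finite (fromEdgeSet A)
  have : Nonempty (fromEdgeSet A).ConnectedComponent :=
    ⟨(fromEdgeSet A).connectedComponentMk Classical.ofNonempty⟩
  exact Nat.card_pos

lemma nc_mono [Finite V] {A B : Set (Sym2 V)} (h : A ⊆ B) : nc B ≤ nc A := by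
  have := cc_finite (fromEdgeSet A)
  refine Nat.card_le_card_of_surjective
    (Quot.lift (fun x => (fromEdgeSet B).connectedComponentMk x)
      (fun a b hab => ConnectedComponent.sound (hab.mono (fromEdgeSet_mono h)))) ?_
  rintro ⟨x⟩
  exact ⟨(fromEdgeSet A).connectedComponentMk x, rfl⟩

lemma nc_empty [Fintype V] : nc (∅ : Set (Sym2 V)) = Fintype.card V := by
  rw [nc, fromEdgeSet_empty, ← Nat.card_eq_fintype_card]
  refine Nat.card_congr ⟨Quot.lift id (fun a b hab => reachable_bot.1 hab),
    fun x => (⊥ : SimpleGraph V).connectedComponentMk x, ?_, fun x => rfl⟩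
  rintro ⟨x⟩; rfl

/-- reachability after inserting one edge -/
lemma reachable_insert {A : Set (Sym2 V)} {a b x y : V}
    (h : (fromEdgeSet (insert s(a,b) A)).Reachable x y) :
    (fromEdgeSet A).Reachable x y ∨
      ((fromEdgeSet A).Reachable x a ∧ (fromEdgeSet A).Reachable b y) ∨
      ((fromEdgeSet A).Reachable x b ∧ (fromEdgeSet A).Reachable a y) := by
  obtain ⟨p⟩ := h
  induction p with
  | nil => exact Or.inl (Reachable.refl _)
  | @cons x z y hadj p ih =>
    rw [fromEdgeSet_adj, Set.mem_insert_iff] at hadj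
    obtain ⟨he | he, hne⟩ := hadj
    · rw [Sym2.eq_iff] at he
      obtain ⟨ha, hz⟩ | ⟨ha, hz⟩ := he
      · subst ha; subst hz
        rcases ih with h1 | ⟨h1, h2⟩ | ⟨h1, h2⟩
        · exact Or.inr (Or.inl ⟨Reachable.refl _, h1⟩)
        · exact Or.inr (Or.inl ⟨Reachable.refl _, h2⟩)
        · exact Or.inl h2
      · subst ha; subst hz
        rcases ih with h1 | ⟨h1, h2⟩ | ⟨h1, h2⟩
        · exact Or.inr (Or.inr ⟨Reachable.refl _, h1⟩)
        · exact Or.inl h2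
        · exact Or.inr (Or.inr ⟨Reachable.refl _, h2⟩)
    · have hxz : (fromEdgeSet A).Reachable x z :=
        Adj.reachable (by rw [fromEdgeSet_adj]; exact ⟨he, hne⟩)
      rcases ih with h1 | ⟨h1, h2⟩ | ⟨h1, h2⟩
      · exact Or.inl (hxz.trans h1)
      · exact Or.inr (Or.inl ⟨hxz.trans h1, h2⟩)
      · exact Or.inr (Or.inr ⟨hxz.trans h1, h2⟩)

lemma nc_insert_le [Finite V] (A : Set (Sym2 V)) (w : Sym2 V) :
    nc A ≤ nc (insert w A) + 1 := by
  classical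
  induction w using Sym2.ind with
  | _ a b =>
  have := cc_finite (fromEdgeSet (insert s(a,b) A))
  have := cc_finite (fromEdgeSet A)
  set π : (fromEdgeSet A).ConnectedComponent → (fromEdgeSet (insert s(a,b) A)).ConnectedComponent :=
    Quot.lift (fun x => (fromEdgeSet (insert s(a,b) A)).connectedComponentMk x)
      (fun p q hpq => ConnectedComponent.sound (hpq.mono (fromEdgeSet_mono (Set.subset_insert _ _)))) with hπ
  have key : Function.Injective (fun c : (fromEdgeSet A).ConnectedComponent =>
      if c = (fromEdgeSet A).connectedComponentMk a
      then (Sum.inr () : (fromEdgeSet (insert s(a,b) A)).ConnectedComponent ⊕ Unit)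
      else Sum.inl (π c)) := by
    intro c₁ c₂ hc
    dsimp only at hc
    by_cases h1 : c₁ = (fromEdgeSet A).connectedComponentMk a <;>
      by_cases h2 : c₂ = (fromEdgeSet A).connectedComponentMk a
    · rw [h1, h2]
    · rw [if_pos h1, if_neg h2] at hc; simp at hc
    · rw [if_neg h1, if_pos h2] at hc; simp at hc
    · rw [if_neg h1, if_neg h2] at hc
      simp only [Sum.inl.injEq] at hc
      obtain ⟨x, rfl⟩ := Quot.exists_rep c₁
      obtain ⟨y, rfl⟩ := Quot.exists_rep c₂
      have hr : (fromEdgeSet (insert s(a,b) A)).Reachable x y := (ConnectedComponent.eq).1 hc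
      rcases reachable_insert hr with h | ⟨ha, _⟩ | ⟨_, ha⟩
      · exact ConnectedComponent.sound h
      · exact absurd (ConnectedComponent.sound ha) h1
      · exact absurd (ConnectedComponent.sound ha).symm h2
  calc nc A ≤ Nat.card ((fromEdgeSet (insert s(a,b) A)).ConnectedComponent ⊕ Unit) :=
        Nat.card_le_card_of_injective _ key
    _ = nc (insert s(a,b) A) + 1 := by simp [Nat.card_sum, nc]


section CtrDef
variable {V : Type*} [DecidableEq V]

/-- contraction map: send `v` to `u`, everything else to itself -/
def ctr {u v : V} (huv : u ≠ v) : V → {x : V // x ≠ v} :=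
  fun x => if h : x = v then ⟨u, huv⟩ else ⟨x, h⟩

lemma ctr_v {u v : V} (huv : u ≠ v) : ctr huv v = ⟨u, huv⟩ := by simp [ctr]

lemma ctr_coe {u v : V} (huv : u ≠ v) (a : {x : V // x ≠ v}) : ctr huv ↑a = a := by
  simp [ctr, a.2]

lemma ctr_of_ne {u v : V} (huv : u ≠ v) {x : V} (hx : x ≠ v) : ctr huv x = ⟨x, hx⟩ := by
  simp [ctr, hx]

lemma ctr_eq_cases {u v : V} (huv : u ≠ v) {x y : V} (h : ctr huv x = ctr huv y) :
    x = y ∨ (x = u ∧ y = v) ∨ (x = v ∧ y = u) := by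
  by_cases hx : x = v <;> by_cases hy : y = v
  · left; rw [hx, hy]
  · rw [hx, ctr_v, ctr_of_ne huv hy] at h
    right; right
    exact ⟨hx, by have := congrArg Subtype.val h; simpa using this.symm⟩
  · rw [hy, ctr_v, ctr_of_ne huv hx] at h
    right; left
    exact ⟨by have := congrArg Subtype.val h; simpa using this, hy⟩
  · left
    rw [ctr_of_ne huv hx, ctr_of_ne huv hy] at h
    have := congrArg Subtype.val h; simpa using this

lemma comp_contract {u v : V} (huv : u ≠ v) (A : Set (Sym2 V)) (hA : s(u,v) ∉ A) :
    Nat.card (fromEdgeSet (insert s(u,v) A)).ConnectedComponent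
      = Nat.card (fromEdgeSet (Sym2.map (ctr huv) '' A) : SimpleGraph {x : V // x ≠ v}).ConnectedComponent := by
  set G₁ := fromEdgeSet (insert s(u,v) A) with hG₁
  set G₂ := (fromEdgeSet (Sym2.map (ctr huv) '' A) : SimpleGraph {x : V // x ≠ v}) with hG₂
  have hadj₁ : ∀ x y, G₁.Adj x y → G₂.Reachable (ctr huv x) (ctr huv y) := by
    intro x y hxy
    rw [hG₁, fromEdgeSet_adj, Set.mem_insert_iff] at hxy
    obtain ⟨he | he, hne⟩ := hxy
    · rw [Sym2.eq_iff] at he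
      obtain ⟨hx, hy⟩ | ⟨hx, hy⟩ := he
      · subst hx; subst hy
        rw [ctr_v, ctr_of_ne huv huv]
      · subst hx; subst hy
        rw [ctr_v, ctr_of_ne huv huv]
    · refine Adj.reachable ?_
      rw [hG₂, fromEdgeSet_adj]
      constructor
      · rw [← Sym2.map_pair_eq]; exact ⟨_, he, rfl⟩
      · intro hcc
        rcases ctr_eq_cases huv hcc with h | ⟨hx, hy⟩ | ⟨hx, hy⟩
        · exact hne h
        · subst hx; subst hy; exact hA he
        · subst hx; subst hy; exact hA (Sym2.eq_swap ▸ he)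
  have hreach_uv : G₁.Reachable u v := by
    refine Adj.reachable ?_
    rw [hG₁, fromEdgeSet_adj]
    exact ⟨Set.mem_insert _ _, huv⟩
  have hcoe : ∀ x : V, G₁.Reachable ↑(ctr huv x) x := by
    intro x
    by_cases hx : x = v
    · subst hx; rw [ctr_v]; exact hreach_uv
    · rw [ctr_of_ne huv hx]
  have hadj₂ : ∀ a b : {x : V // x ≠ v}, G₂.Adj a b → G₁.Reachable ↑a ↑b := by
    intro a b hab
    rw [hG₂, fromEdgeSet_adj] at hab
    obtain ⟨⟨w, hw, hwe⟩, hne⟩ := hab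
    induction w using Sym2.ind with
    | _ x y =>
    rw [Sym2.map_pair_eq, Sym2.eq_iff] at hwe
    have hxy : G₁.Reachable x y := by
      refine Adj.reachable ?_
      rw [hG₁, fromEdgeSet_adj]
      refine ⟨Set.mem_insert_iff.2 (Or.inr hw), ?_⟩
      rintro rfl
      obtain ⟨h1, h2⟩ | ⟨h1, h2⟩ := hwe <;> exact hne (by rw [← h1, ← h2])
    obtain ⟨ha, hb⟩ | ⟨hb, ha⟩ := hwe
    · have h1 := hcoe x; rw [ha] at h1
      have h2 := hcoe y; rw [hb] at h2
      exact (h1.trans hxy).trans h2.symm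
    · have h1 := hcoe y; rw [ha] at h1
      have h2 := hcoe x; rw [hb] at h2
      exact (h1.trans hxy.symm).trans h2.symm
  refine Nat.card_congr ⟨
    Quot.lift (fun x => G₂.connectedComponentMk (ctr huv x))
      (fun p q hpq => ?_),
    Quot.lift (fun a => G₁.connectedComponentMk ↑a)
      (fun p q hpq => ?_), ?_, ?_⟩
  · refine ConnectedComponent.sound ?_
    obtain ⟨w⟩ := hpq
    induction w with
    | nil => exact Reachable.refl _
    | cons h p ih => exact (hadj₁ _ _ h).trans ih
  · refine ConnectedComponent.sound ?_
    obtain ⟨w⟩ := hpq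
    induction w with
    | nil => exact Reachable.refl _
    | cons h p ih => exact (hadj₂ _ _ h).trans ih
  · rintro ⟨x⟩
    exact ConnectedComponent.sound (hcoe x)
  · rintro ⟨a⟩
    exact congrArg _ (ctr_coe huv a)


end CtrDef

lemma exact_image_sign {β γ : Type*} [DecidableEq β] [DecidableEq γ] (E' : Finset β) (ψ : β → γ) :
    ∀ S : Finset γ, S ⊆ E'.image ψ →
      ∑ A ∈ E'.powerset.filter (fun A => A.image ψ = S), (-1:ℤ)^A.card = (-1)^S.card := by
  intro S
  induction S using Finset.strongInduction with
  | _ S ih =>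
  intro hS
  have hsplit : ((E'.filter (fun x => ψ x ∈ S)).powerset : Finset (Finset β))
      = (S.powerset).biUnion (fun T => E'.powerset.filter (fun A => A.image ψ = T)) := by
    ext A
    simp only [mem_powerset, mem_biUnion, mem_filter]
    constructor
    · intro hA
      refine ⟨A.image ψ, ?_, ⟨fun x hx => (mem_filter.1 (hA hx)).1, rfl⟩⟩
      intro t ht
      obtain ⟨x, hx, rfl⟩ := mem_image.1 ht
      exact (mem_filter.1 (hA hx)).2
    · rintro ⟨T, hT, ⟨hAE, rfl⟩⟩
      intro x hx
      exact mem_filter.2 ⟨hAE hx, hT (mem_image_of_mem _ hx)⟩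
  have hdisj : ∀ T₁ ∈ S.powerset, ∀ T₂ ∈ S.powerset, T₁ ≠ T₂ →
      Disjoint (E'.powerset.filter (fun A => A.image ψ = T₁))
               (E'.powerset.filter (fun A => A.image ψ = T₂)) := by
    intro T₁ _ T₂ _ hne
    rw [Finset.disjoint_left]
    intro A h1 h2
    rw [mem_filter] at h1 h2
    exact hne (h1.2 ▸ h2.2)
  have hU : ∑ T ∈ S.powerset, ∑ A ∈ E'.powerset.filter (fun A => A.image ψ = T), (-1:ℤ)^A.card
      = ∑ A ∈ (E'.filter (fun x => ψ x ∈ S)).powerset, (-1:ℤ)^A.card := by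
    rw [hsplit, Finset.sum_biUnion hdisj]
  rw [Finset.sum_powerset_neg_one_pow_card] at hU
  have hps : S.powerset = insert S (S.powerset.erase S) := by
    rw [Finset.insert_erase (Finset.mem_powerset_self S)]
  rw [hps, Finset.sum_insert (Finset.notMem_erase _ _)] at hU
  have hrest : ∑ T ∈ S.powerset.erase S, ∑ A ∈ E'.powerset.filter (fun A => A.image ψ = T), (-1:ℤ)^A.card
      = ∑ T ∈ S.powerset.erase S, (-1:ℤ)^T.card := by
    refine Finset.sum_congr rfl ?_
    intro T hT
    rw [Finset.mem_erase, Finset.mem_powerset] at hT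
    exact ih T (Finset.ssubset_iff_subset_ne.2 ⟨hT.2, hT.1⟩) (hT.2.trans hS)
  have hpow : ∑ T ∈ S.powerset.erase S, (-1:ℤ)^T.card
      = (if S = ∅ then 1 else 0) - (-1)^S.card := by
    have : ∑ T ∈ S.powerset, (-1:ℤ)^T.card = (if S = ∅ then 1 else 0) :=
      Finset.sum_powerset_neg_one_pow_card
    rw [hps, Finset.sum_insert (Finset.notMem_erase _ _)] at this
    linarith [this]
  have hempty : (if (E'.filter (fun x => ψ x ∈ S)) = ∅ then (1:ℤ) else 0) = (if S = ∅ then 1 else 0) := by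
    by_cases h : S = ∅
    · subst h; simp
    · rw [if_neg h, if_neg]
      obtain ⟨s, hs⟩ := Finset.nonempty_iff_ne_empty.2 h
      obtain ⟨x, hx, rfl⟩ := mem_image.1 (hS hs)
      intro hcon
      have : x ∈ E'.filter (fun t => ψ t ∈ S) := mem_filter.2 ⟨hx, hs⟩
      rw [hcon] at this
      exact absurd this (Finset.notMem_empty x)
  rw [hrest, hpow] at hU
  rw [hempty] at hU
  linarith [hU]

/-- collapsing a sum over subsets of `E'` to a sum over subsets of the image -/
lemma fiber_collapse {β γ : Type*} [DecidableEq β] [DecidableEq γ] (E' : Finset β) (ψ : β → γ)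
    (F : Finset γ → ℤ) :
    ∑ A ∈ E'.powerset, (-1:ℤ)^A.card * F (A.image ψ)
      = ∑ S ∈ (E'.image ψ).powerset, (-1:ℤ)^S.card * F S := by
  rw [← Finset.sum_fiberwise_of_maps_to (g := fun A : Finset β => A.image ψ)
    (t := (E'.image ψ).powerset) (fun A hA => by
      rw [mem_powerset] at hA ⊢
      exact Finset.image_subset_image hA)]
  refine Finset.sum_congr rfl ?_
  intro S hS
  rw [mem_powerset] at hS
  have : ∑ A ∈ E'.powerset.filter (fun A => A.image ψ = S), (-1:ℤ)^A.card * F (A.image ψ)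
      = ∑ A ∈ E'.powerset.filter (fun A => A.image ψ = S), (-1:ℤ)^A.card * F S := by
    refine Finset.sum_congr rfl ?_
    intro A hA
    rw [(mem_filter.1 hA).2]
  rw [this, ← Finset.sum_mul, exact_image_sign E' ψ S hS]


section Sums
variable {V : Type*}





lemma graphRank_eq [Fintype V] (A : Set (Sym2 V)) : graphRank A = Fintype.card V - nc A := rfl

lemma neg_one_pow_sub {a b : ℕ} (h : b ≤ a) : (-1:ℤ)^(a-b) = (-1)^a * (-1)^b := by
  conv_rhs => rw [← Nat.sub_add_cancel h, pow_add, mul_assoc, ← mul_pow]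
  simp

/-- rank is at most the number of edges -/
lemma rank_le_card [Fintype V] [DecidableEq V] (S : Finset (Sym2 V)) :
    graphRank (↑S : Set (Sym2 V)) ≤ S.card := by
  induction S using Finset.induction_on with
  | empty => simp [graphRank_eq, nc_empty]
  | @insert w S hw ih =>
    rw [Finset.coe_insert]
    have h1 := nc_insert_le (↑S : Set (Sym2 V)) w
    have h2 := nc_le_card (↑S : Set (Sym2 V))
    rw [graphRank_eq] at ih ⊢
    rw [Finset.card_insert_of_notMem hw]
    omega

/-- classical edge finset -/
noncomputable def ES [Finite V] (G : SimpleGraph V) : Finset (Sym2 V) :=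
  Set.Finite.toFinset (Set.toFinite G.edgeSet)

lemma mem_ES [Finite V] {G : SimpleGraph V} {w : Sym2 V} : w ∈ ES G ↔ w ∈ G.edgeSet :=
  Set.Finite.mem_toFinset _

lemma coe_ES [Finite V] (G : SimpleGraph V) : (↑(ES G) : Set (Sym2 V)) = G.edgeSet :=
  Set.Finite.coe_toFinset _

noncomputable def dsum [Fintype V] (G : SimpleGraph V) : ℤ :=
  ∑ A ∈ (ES G).powerset, (-1:ℤ)^(A.card - graphRank (↑A : Set (Sym2 V)))

noncomputable def gsum [Fintype V] (G : SimpleGraph V) : ℤ :=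
  ∑ A ∈ (ES G).powerset,
    if nc (↑A : Set (Sym2 V)) = 1 then (-1:ℤ)^(A.card - graphRank (↑A : Set (Sym2 V))) else 0

noncomputable def rkNeg {W : Type*} [Fintype W] (S : Finset (Sym2 W)) : ℤ :=
  (-1)^(graphRank (↑S : Set (Sym2 W)))

noncomputable def rkNegC {W : Type*} [Fintype W] (S : Finset (Sym2 W)) : ℤ :=
  if nc (↑S : Set (Sym2 W)) = 1 then (-1)^(graphRank (↑S : Set (Sym2 W))) else 0

/-- the contracted graph -/
noncomputable def Gctr [DecidableEq V] (G : SimpleGraph V) {u v : V} (huv : u ≠ v) :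
    SimpleGraph {x : V // x ≠ v} :=
  fromEdgeSet (Sym2.map (ctr huv) '' (G.edgeSet \ {s(u,v)}))

lemma ES_deleteEdges [Finite V] [DecidableEq V] (G : SimpleGraph V) (e : Sym2 V) :
    ES (G.deleteEdges {e}) = (ES G).erase e := by
  ext w
  rw [mem_ES, edgeSet_deleteEdges, Finset.mem_erase, mem_ES]
  simp only [Set.mem_diff, Set.mem_singleton_iff]
  tauto

lemma ES_Gctr [Fintype V] [DecidableEq V] (G : SimpleGraph V) {u v : V} (h : G.Adj u v) :
    ES (Gctr G h.ne) = ((ES G).erase s(u,v)).image (Sym2.map (ctr h.ne)) := by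
  have hnd : ∀ w ∈ G.edgeSet \ {s(u,v)}, ¬ (Sym2.map (ctr h.ne) w).IsDiag := by
    intro w hw
    induction w using Sym2.ind with
    | _ x y =>
    rw [Sym2.map_pair_eq, Sym2.mk_isDiag_iff]
    intro hcc
    rcases ctr_eq_cases h.ne hcc with heq | ⟨hx, hy⟩ | ⟨hx, hy⟩
    · exact (G.ne_of_adj (G.mem_edgeSet.1 hw.1)) heq
    · exact hw.2 (by rw [hx, hy]; exact rfl)
    · exact hw.2 (by rw [hx, hy, Sym2.eq_swap]; exact rfl)
  ext w
  rw [mem_ES]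
  unfold Gctr
  rw [edgeSet_fromEdgeSet]
  simp only [Set.mem_diff, Set.mem_setOf_eq, Finset.mem_image]
  constructor
  · rintro ⟨⟨w', hw', rfl⟩, _⟩
    exact ⟨w', by rw [Finset.mem_erase, mem_ES]; exact ⟨hw'.2, hw'.1⟩, rfl⟩
  · rintro ⟨w', hw', rfl⟩
    rw [Finset.mem_erase, mem_ES] at hw'
    have hw'' : w' ∈ G.edgeSet \ {s(u,v)} := ⟨hw'.2, hw'.1⟩
    exact ⟨⟨w', hw'', rfl⟩, hnd w' hw''⟩

section Rec
variable [Fintype V] [DecidableEq V] (G : SimpleGraph V) {u v : V} (h : G.Adj u v)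

lemma card_V' : Fintype.card {x : V // x ≠ v} = Fintype.card V - 1 := by
  have := Fintype.card_subtype_compl (fun x : V => x = v)
  simpa [Fintype.card_subtype_eq] using this

/-- the key exponent identity for edge subsets not containing e -/
lemma exponent_eq (A : Finset (Sym2 V)) (hA : s(u,v) ∉ A) :
    (insert s(u,v) A).card - graphRank (↑(insert s(u,v) A) : Set (Sym2 V))
      = A.card + 1 - (Fintype.card V - nc (↑(insert s(u,v) A) : Set (Sym2 V))) := by
  rw [Finset.card_insert_of_notMem hA, graphRank_eq]

lemma nc_insert_eq_image (A : Finset (Sym2 V)) (hA : s(u,v) ∉ A) :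
    nc (↑(insert s(u,v) A) : Set (Sym2 V))
      = nc (↑(A.image (Sym2.map (ctr h.ne))) : Set (Sym2 {x : V // x ≠ v})) := by
  rw [Finset.coe_insert, Finset.coe_image]
  exact comp_contract h.ne _ (by rwa [Finset.mem_coe])

lemma term_transform (A : Finset (Sym2 V)) (hA : s(u,v) ∉ A) :
    (-1:ℤ)^((insert s(u,v) A).card - graphRank (↑(insert s(u,v) A) : Set (Sym2 V)))
      = (-1:ℤ)^A.card *
        (-1:ℤ)^(graphRank (↑(A.image (Sym2.map (ctr h.ne))) : Set (Sym2 {x : V // x ≠ v}))) := by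
  haveI : Nonempty {x : V // x ≠ v} := ⟨⟨u, h.ne⟩⟩
  set S := A.image (Sym2.map (ctr h.ne)) with hSdef
  have hcc : nc (↑(insert s(u,v) A) : Set (Sym2 V)) = nc (↑S : Set (Sym2 {x : V // x ≠ v})) :=
    nc_insert_eq_image G h A hA
  have h1 : 1 ≤ nc (↑S : Set (Sym2 {x : V // x ≠ v})) := one_le_nc _
  have h2 : nc (↑S : Set (Sym2 {x : V // x ≠ v})) ≤ Fintype.card V - 1 := by
    rw [← card_V' (v := v)]; exact nc_le_card _
  have h3 : graphRank (↑S : Set (Sym2 {x : V // x ≠ v})) ≤ A.card := by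
    calc graphRank (↑S : Set (Sym2 {x : V // x ≠ v})) ≤ S.card := rank_le_card S
      _ ≤ A.card := Finset.card_image_le
  have hn1 : 1 ≤ Fintype.card V := by
    have : Nonempty V := ⟨v⟩
    exact Fintype.card_pos
  have hexp : (insert s(u,v) A).card - graphRank (↑(insert s(u,v) A) : Set (Sym2 V))
      = A.card - graphRank (↑S : Set (Sym2 {x : V // x ≠ v})) := by
    rw [exponent_eq A hA, hcc]
    rw [graphRank_eq, card_V']
    omega
  rw [hexp, neg_one_pow_sub h3]

/-- deletion–contraction for dsum -/
lemma dsum_rec : dsum G = dsum (G.deleteEdges {s(u,v)}) + dsum (Gctr G h.ne) := by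
  haveI : Nonempty {x : V // x ≠ v} := ⟨⟨u, h.ne⟩⟩
  have he : s(u,v) ∈ ES G := mem_ES.2 (G.mem_edgeSet.2 h)
  have hins : ES G = insert s(u,v) ((ES G).erase s(u,v)) := (Finset.insert_erase he).symm
  rw [dsum, hins, Finset.sum_powerset_insert (Finset.notMem_erase _ _)]
  congr 1
  · rw [dsum, ES_deleteEdges]
  · have hterm : ∀ A ∈ ((ES G).erase s(u,v)).powerset,
        (-1:ℤ)^((insert s(u,v) A).card - graphRank (↑(insert s(u,v) A) : Set (Sym2 V)))
        = (-1:ℤ)^A.card * rkNeg (A.image (Sym2.map (ctr h.ne))) := by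
      intro A hA
      rw [Finset.mem_powerset] at hA
      have : s(u,v) ∉ A := fun hc => Finset.notMem_erase _ _ (hA hc)
      rw [rkNeg]
      exact term_transform G h A this
    rw [Finset.sum_congr rfl hterm, fiber_collapse _ _ rkNeg, dsum, ES_Gctr G h]
    refine Finset.sum_congr rfl ?_
    intro S hS
    rw [Finset.mem_powerset] at hS
    rw [rkNeg, ← neg_one_pow_sub (rank_le_card S)]

/-- deletion–contraction for gsum -/
lemma gsum_rec : gsum G = gsum (G.deleteEdges {s(u,v)}) + gsum (Gctr G h.ne) := by
  haveI : Nonempty {x : V // x ≠ v} := ⟨⟨u, h.ne⟩⟩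
  have he : s(u,v) ∈ ES G := mem_ES.2 (G.mem_edgeSet.2 h)
  have hins : ES G = insert s(u,v) ((ES G).erase s(u,v)) := (Finset.insert_erase he).symm
  rw [gsum, hins, Finset.sum_powerset_insert (Finset.notMem_erase _ _)]
  congr 1
  · rw [gsum, ES_deleteEdges]
  · have hterm : ∀ A ∈ ((ES G).erase s(u,v)).powerset,
        (if nc (↑(insert s(u,v) A) : Set (Sym2 V)) = 1 then (-1:ℤ)^((insert s(u,v) A).card - graphRank (↑(insert s(u,v) A) : Set (Sym2 V))) else 0)
        = (-1:ℤ)^A.card * rkNegC (A.image (Sym2.map (ctr h.ne))) := by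
      intro A hA
      rw [Finset.mem_powerset] at hA
      have hnA : s(u,v) ∉ A := fun hc => Finset.notMem_erase _ _ (hA hc)
      rw [rkNegC, nc_insert_eq_image G h A hnA]
      by_cases hcond : nc (↑(A.image (Sym2.map (ctr h.ne))) : Set (Sym2 {x : V // x ≠ v})) = 1
      · rw [if_pos hcond, if_pos hcond, term_transform G h A hnA]
      · rw [if_neg hcond, if_neg hcond, mul_zero]
    rw [Finset.sum_congr rfl hterm, fiber_collapse _ _ rkNegC, gsum, ES_Gctr G h]
    refine Finset.sum_congr rfl ?_
    intro S hS
    rw [Finset.mem_powerset] at hS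
    rw [rkNegC]
    by_cases hcond : nc (↑S : Set (Sym2 {x : V // x ≠ v})) = 1
    · rw [if_pos hcond, if_pos hcond, ← neg_one_pow_sub (rank_le_card S)]
    · rw [if_neg hcond, if_neg hcond, mul_zero]

end Rec

end Sums

section Orients
variable {V : Type*}


/-! relation helpers -/

def rese (e : Sym2 V) (r : V → V → Prop) : V → V → Prop := fun i j => r i j ∧ s(i,j) ≠ e
def exte (u v : V) (r : V → V → Prop) : V → V → Prop := fun i j => r i j ∨ (i = u ∧ j = v)

lemma not_transGen_to_source {r : V → V → Prop} {q : V} (hq : IsSource r q) :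
    ∀ x, ¬ Relation.TransGen r x q := by
  intro x hx
  cases hx with
  | single h => exact hq _ h
  | tail _ h => exact hq _ h

lemma exists_source [Finite V] {r : V → V → Prop} (hr : IsAcyclicRel r) (x : V) :
    ∃ z, IsSource r z ∧ (z = x ∨ Relation.TransGen r z x) := by
  haveI : IsIrrefl V (Relation.TransGen r) := ⟨fun a h => hr a h⟩
  have wf : WellFounded (Relation.TransGen r) :=
    Finite.wellFounded_of_trans_of_irrefl _
  obtain ⟨z, hz, hmin⟩ := wf.has_min {z | z = x ∨ Relation.TransGen r z x} ⟨x, Or.inl rfl⟩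
  refine ⟨z, ?_, hz⟩
  intro j hj
  have hjs : j ∈ {z | z = x ∨ Relation.TransGen r z x} := by
    rcases hz with rfl | hz
    · exact Or.inr (Relation.TransGen.single hj)
    · exact Or.inr (Relation.TransGen.head hj hz)
  exact hmin j hjs (Relation.TransGen.single hj)

lemma transGen_exte {r : V → V → Prop} {u v x y : V}
    (h : Relation.TransGen (exte u v r) x y) :
    Relation.TransGen r x y ∨
      (Relation.ReflTransGen r x u ∧ Relation.ReflTransGen r v y) := by
  induction h with
  | single hs =>
    rcases hs with hs | ⟨rfl, rfl⟩
    · exact Or.inl (Relation.TransGen.single hs)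
    · exact Or.inr ⟨Relation.ReflTransGen.refl, Relation.ReflTransGen.refl⟩
  | tail hxb hbc ih =>
    rcases hbc with hs | ⟨rfl, rfl⟩
    · rcases ih with h1 | ⟨h1, h2⟩
      · exact Or.inl (h1.tail hs)
      · exact Or.inr ⟨h1, h2.tail hs⟩
    · rcases ih with h1 | ⟨h1, h2⟩
      · exact Or.inr ⟨h1.to_reflTransGen, Relation.ReflTransGen.refl⟩
      · exact Or.inr ⟨h1, Relation.ReflTransGen.refl⟩

lemma isAcyclicRel_exte {r : V → V → Prop} {u v : V} (hr : IsAcyclicRel r)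
    (hne : u ≠ v) (hvu : ¬ Relation.TransGen r v u) : IsAcyclicRel (exte u v r) := by
  intro x hx
  rcases transGen_exte hx with h1 | ⟨h1, h2⟩
  · exact hr x h1
  · have : Relation.ReflTransGen r v u := h2.trans h1
    rcases Relation.reflTransGen_iff_eq_or_transGen.1 this with rfl | hT
    · exact hne rfl
    · exact hvu hT

/-! orientation transfer between `G`, `G - e` -/

section DelExt
variable {G : SimpleGraph V} {u v : V}

lemma rese_orientation (hadj : G.Adj u v) {r : V → V → Prop} (hr : IsOrientation G r) :
    IsOrientation (G.deleteEdges {s(u,v)}) (rese s(u,v) r) := by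
  constructor
  · intro i j
    rw [deleteEdges_adj, hr.1 i j]
    simp only [Set.mem_singleton_iff, rese]
    rw [show s(j,i) = s(i,j) from Sym2.eq_swap]
    tauto
  · intro i j hij hji
    exact hr.2 i j hij.1 hji.1

lemma no_rdel_uv {r' : V → V → Prop} (hr' : IsOrientation (G.deleteEdges {s(u,v)}) r') :
    ¬ r' u v ∧ ¬ r' v u := by
  have h1 : ¬ (G.deleteEdges {s(u,v)}).Adj u v := by
    rw [deleteEdges_adj]
    simp
  rw [hr'.1 u v] at h1
  exact ⟨fun hc => h1 (Or.inl hc), fun hc => h1 (Or.inr hc)⟩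

lemma exte_orientation (hadj : G.Adj u v) {r' : V → V → Prop}
    (hr' : IsOrientation (G.deleteEdges {s(u,v)}) r') :
    IsOrientation G (exte u v r') := by
  have hnouv := no_rdel_uv hr'
  constructor
  · intro i j
    by_cases hij : s(i,j) = s(u,v)
    · rw [Sym2.eq_iff] at hij
      simp only [exte]
      rcases hij with ⟨rfl, rfl⟩ | ⟨rfl, rfl⟩
      · simp [hadj]
      · constructor
        · intro _; right; right; exact ⟨rfl, rfl⟩
        · intro _; exact hadj.symm
    · have : G.Adj i j ↔ (G.deleteEdges {s(u,v)}).Adj i j := by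
        rw [deleteEdges_adj]
        simp [hij]
      rw [this, hr'.1 i j]
      simp only [exte]
      constructor
      · tauto
      · rintro ((hh | ⟨rfl, rfl⟩) | (hh | ⟨rfl, rfl⟩))
        · exact Or.inl hh
        · exact absurd rfl hij
        · exact Or.inr hh
        · exact absurd Sym2.eq_swap hij
  · rintro i j (hij | ⟨hiu, hjv⟩) (hji | ⟨hju, hiv⟩)
    · exact hr'.2 i j hij hji
    · refine hnouv.2 ?_
      rw [← hiv, ← hju]; exact hij
    · refine hnouv.2 ?_
      rw [← hiu, ← hjv]; exact hji
    · exact (G.ne_of_adj hadj) (by rw [← hiu, hiv])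

lemma rese_exte {r' : V → V → Prop}
    (hr' : IsOrientation (G.deleteEdges {s(u,v)}) r') :
    rese s(u,v) (exte u v r') = r' := by
  have hnouv := no_rdel_uv hr'
  funext i j
  apply propext
  simp only [rese, exte]
  constructor
  · rintro ⟨hh | ⟨rfl, rfl⟩, hne⟩
    · exact hh
    · exact absurd rfl hne
  · intro hh
    refine ⟨Or.inl hh, ?_⟩
    intro hc
    rw [Sym2.eq_iff] at hc
    rcases hc with ⟨rfl, rfl⟩ | ⟨rfl, rfl⟩
    · exact hnouv.1 hh
    · exact hnouv.2 hh

lemma exte_rese {r : V → V → Prop} (hr : IsOrientation G r) (hruv : r u v) :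
    exte u v (rese s(u,v) r) = r := by
  funext i j
  apply propext
  simp only [rese, exte]
  constructor
  · rintro (⟨hh, _⟩ | ⟨rfl, rfl⟩)
    · exact hh
    · exact hruv
  · intro hh
    by_cases hij : s(i,j) = s(u,v)
    · rw [Sym2.eq_iff] at hij
      rcases hij with ⟨rfl, rfl⟩ | ⟨rfl, rfl⟩
      · exact Or.inr ⟨rfl, rfl⟩
      · exact absurd hruv (hr.2 i j hh)
    · exact Or.inl ⟨hh, hij⟩

end DelExt

namespace Part5b
variable {G : SimpleGraph V} {u v : V}

lemma A1_image (hadj : G.Adj u v) :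
    (rese s(u,v)) '' {r | r ∈ Acyc G ∧ r u v}
      = {r' | r' ∈ Acyc (G.deleteEdges {s(u,v)}) ∧ ¬ Relation.TransGen r' v u} := by
  ext r'
  constructor
  · rintro ⟨r, ⟨⟨hor, hac⟩, hruv⟩, rfl⟩
    refine ⟨⟨rese_orientation hadj hor,
      fun x hx => hac x (TransGen.mono (fun i j hij => hij.1) _ _ hx)⟩, ?_⟩
    intro hT
    exact hac v ((TransGen.mono (fun i j hij => hij.1) _ _ hT).tail hruv)
  · rintro ⟨⟨hor', hac'⟩, hT⟩
    exact ⟨exte u v r',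
      ⟨⟨exte_orientation hadj hor', isAcyclicRel_exte hac' (G.ne_of_adj hadj) hT⟩,
        Or.inr ⟨rfl, rfl⟩⟩, rese_exte hor'⟩

lemma A1_injOn : Set.InjOn (rese s(u,v)) {r | r ∈ Acyc G ∧ r u v} := by
  intro r₁ h₁ r₂ h₂ heq
  calc r₁ = exte u v (rese s(u,v) r₁) := (exte_rese h₁.1.1 h₁.2).symm
    _ = exte u v (rese s(u,v) r₂) := by rw [heq]
    _ = r₂ := exte_rese h₂.1.1 h₂.2

lemma ncard_A_eq (hadj : G.Adj u v) :
    {r | r ∈ Acyc G ∧ r u v}.ncard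
      = {r' | r' ∈ Acyc (G.deleteEdges {s(u,v)}) ∧ ¬ Relation.TransGen r' v u}.ncard := by
  rw [← A1_image hadj, Set.ncard_image_of_injOn A1_injOn]

lemma acyc_split (hadj : G.Adj u v) :
    Acyc G = {r | r ∈ Acyc G ∧ r u v} ∪ {r | r ∈ Acyc G ∧ r v u} := by
  ext r
  simp only [Set.mem_union, Set.mem_setOf_eq]
  constructor
  · intro hr
    rcases (hr.1.1 u v).1 hadj with h | h
    · exact Or.inl ⟨hr, h⟩
    · exact Or.inr ⟨hr, h⟩
  · rintro (⟨hr, _⟩ | ⟨hr, _⟩) <;> exact hr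

lemma acyc_split_disj :
    Disjoint {r | r ∈ Acyc G ∧ r u v} {r | r ∈ Acyc G ∧ r v u} := by
  rw [Set.disjoint_left]
  rintro r ⟨hr, h1⟩ ⟨_, h2⟩
  exact hr.1.2 u v h1 h2

lemma C_union :
    {r' | r' ∈ Acyc (G.deleteEdges {s(u,v)}) ∧ ¬ Relation.TransGen r' v u}
      ∪ {r' | r' ∈ Acyc (G.deleteEdges {s(u,v)}) ∧ ¬ Relation.TransGen r' u v}
      = Acyc (G.deleteEdges {s(u,v)}) := by
  ext r'
  simp only [Set.mem_union, Set.mem_setOf_eq]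
  constructor
  · rintro (⟨hr, _⟩ | ⟨hr, _⟩) <;> exact hr
  · intro hr
    by_cases h1 : Relation.TransGen r' v u
    · refine Or.inr ⟨hr, ?_⟩
      intro h2
      exact hr.2 u (h2.trans h1)
    · exact Or.inl ⟨hr, h1⟩

end Part5b



/-- the contracted orientation -/
def Phi {u v : V} (hne : u ≠ v) (r' : V → V → Prop) :
    {x : V // x ≠ v} → {x : V // x ≠ v} → Prop :=
  fun a b => r' ↑a ↑b ∨ (a = ⟨u, hne⟩ ∧ r' v ↑b) ∨ (b = ⟨u, hne⟩ ∧ r' ↑a v)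

section Crux
variable [DecidableEq V] {u v : V} (hne : u ≠ v) {r' : V → V → Prop}

lemma Phi_step_dec {a b : {x : V // x ≠ v}} (h : Phi hne r' a b) :
    ∃ x y, ctr hne x = a ∧ ctr hne y = b ∧ r' x y := by
  rcases h with h | ⟨ha, h⟩ | ⟨hb, h⟩
  · exact ⟨↑a, ↑b, ctr_coe hne a, ctr_coe hne b, h⟩
  · exact ⟨v, ↑b, by rw [ctr_v hne, ha], ctr_coe hne b, h⟩
  · exact ⟨↑a, v, ctr_coe hne a, by rw [ctr_v hne, hb], h⟩

lemma contract_acyclic (hac : IsAcyclicRel r')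
    (huv : ¬ TransGen r' u v) (hvu : ¬ TransGen r' v u) :
    IsAcyclicRel (Phi hne r') := by
  -- the invariant
  set p := ctr hne with hp
  have key : ∀ a b, TransGen (Phi hne r') a b →
      ((∃ x y, p x = a ∧ p y = b ∧ TransGen r' x y) ∨
        ((∃ x w, p x = a ∧ (w = u ∨ w = v) ∧ TransGen r' x w) ∧
         (∃ w' y, (w' = u ∨ w' = v) ∧ p y = b ∧ TransGen r' w' y))) := by
    intro a b h
    induction h with
    | single hs =>
      obtain ⟨x, y, hx, hy, hxy⟩ := Phi_step_dec hne hs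
      exact Or.inl ⟨x, y, hx, hy, TransGen.single hxy⟩
    | tail hab hbc ih =>
      obtain ⟨y', z, hy', hz, hyz⟩ := Phi_step_dec hne hbc
      rcases ih with ⟨x, y, hx, hy, hxy⟩ | ⟨hL, ⟨w', y, hw', hy, hty⟩⟩
      · rcases ctr_eq_cases hne (hy.trans hy'.symm) with heq | ⟨h1, h2⟩ | ⟨h1, h2⟩
        · exact Or.inl ⟨x, z, hx, hz, hxy.trans (TransGen.single (heq ▸ hyz))⟩
        · exact Or.inr ⟨⟨x, y, hx, Or.inl h1, hxy⟩,
            ⟨y', z, Or.inr h2, hz, TransGen.single hyz⟩⟩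
        · exact Or.inr ⟨⟨x, y, hx, Or.inr h1, hxy⟩,
            ⟨y', z, Or.inl h2, hz, TransGen.single hyz⟩⟩
      · rcases ctr_eq_cases hne (hy.trans hy'.symm) with heq | ⟨h1, h2⟩ | ⟨h1, h2⟩
        · exact Or.inr ⟨hL, ⟨w', z, hw', hz, hty.trans (TransGen.single (heq ▸ hyz))⟩⟩
        · exact Or.inr ⟨hL, ⟨y', z, Or.inr h2, hz, TransGen.single hyz⟩⟩
        · exact Or.inr ⟨hL, ⟨y', z, Or.inl h2, hz, TransGen.single hyz⟩⟩
  intro a hcyc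
  have hblob : ∀ x w : V, (x = u ∨ x = v) → (w = u ∨ w = v) → TransGen r' x w → False := by
    rintro x w (rfl | rfl) (rfl | rfl) ht
    · exact hac _ ht
    · exact huv ht
    · exact hvu ht
    · exact hac _ ht
  rcases key a a hcyc with ⟨x, y, hx, hy, hxy⟩ | ⟨⟨x, w, hx, hw, htxw⟩, ⟨w', y, hw', hy, htw'y⟩⟩
  · rcases ctr_eq_cases hne (hx.trans hy.symm) with heq | ⟨h1, h2⟩ | ⟨h1, h2⟩
    · exact hac x (heq ▸ hxy)
    · exact hblob x y (Or.inl h1) (Or.inr h2) hxy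
    · exact hblob x y (Or.inr h1) (Or.inl h2) hxy
  · rcases ctr_eq_cases hne (hx.trans hy.symm) with heq | ⟨h1, h2⟩ | ⟨h1, h2⟩
    · exact hblob w' w hw' hw (htw'y.trans (heq ▸ htxw))
    · exact hblob x w (Or.inl h1) hw htxw
    · exact hblob x w (Or.inr h1) hw htxw
end Crux



section Ctr
variable [DecidableEq V] {G : SimpleGraph V} {u v : V}

lemma Gctr_adj_iff (hadj : G.Adj u v) (a b : {x : V // x ≠ v}) :
    (Gctr G hadj.ne).Adj a b ↔
      ((∃ x y, (G.deleteEdges {s(u,v)}).Adj x y ∧ ctr hadj.ne x = a ∧ ctr hadj.ne y = b) ∧ a ≠ b) := by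
  unfold Gctr
  rw [fromEdgeSet_adj]
  constructor
  · rintro ⟨hmem, hne_ab⟩
    refine ⟨?_, hne_ab⟩
    obtain ⟨w, hw, hwe⟩ := hmem
    induction w using Sym2.ind with
    | _ x y =>
    have hAdj : (G.deleteEdges {s(u,v)}).Adj x y := by
      rw [deleteEdges_adj]
      exact ⟨G.mem_edgeSet.1 hw.1, hw.2⟩
    rw [Sym2.map_pair_eq, Sym2.eq_iff] at hwe
    rcases hwe with ⟨hx, hy⟩ | ⟨hx, hy⟩
    · exact ⟨x, y, hAdj, hx, hy⟩
    · exact ⟨y, x, hAdj.symm, hy, hx⟩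
  · rintro ⟨⟨x, y, hAdj, hx, hy⟩, hne_ab⟩
    refine ⟨⟨s(x,y), ?_, ?_⟩, hne_ab⟩
    · rw [deleteEdges_adj] at hAdj
      exact ⟨G.mem_edgeSet.2 hAdj.1, hAdj.2⟩
    · rw [Sym2.map_pair_eq, hx, hy]

lemma Phi_of_step (hadj : G.Adj u v) {r' : V → V → Prop}
    (hor' : IsOrientation (G.deleteEdges {s(u,v)}) r') {x y : V}
    {a b : {t : V // t ≠ v}}
    (hr : r' x y) (hx : ctr hadj.ne x = a) (hy : ctr hadj.ne y = b) :
    Phi hadj.ne r' a b := by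
  have hxy : x ≠ y := by
    intro hc
    subst hc
    exact (G.deleteEdges {s(u,v)}).loopless.irrefl x ((hor'.1 x x).2 (Or.inl hr))
  by_cases hxv : x = v
  · have hyv : y ≠ v := fun hc => hxy (hxv.trans hc.symm)
    rw [hxv, ctr_v] at hx
    rw [ctr_of_ne hadj.ne hyv] at hy
    right; left
    refine ⟨hx.symm, ?_⟩
    have hb : (↑b : V) = y := by rw [← hy]
    rw [hb, ← hxv]
    exact hr
  · by_cases hyv : y = v
    · rw [hyv, ctr_v] at hy
      rw [ctr_of_ne hadj.ne hxv] at hx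
      right; right
      refine ⟨hy.symm, ?_⟩
      have ha : (↑a : V) = x := by rw [← hx]
      rw [ha, ← hyv]
      exact hr
    · rw [ctr_of_ne hadj.ne hxv] at hx
      rw [ctr_of_ne hadj.ne hyv] at hy
      left
      have ha : (↑a : V) = x := by rw [← hx]
      have hb : (↑b : V) = y := by rw [← hy]
      rw [ha, hb]
      exact hr

/-- `Phi` of an acyclic orientation of `G-e` with no dipath between u,v is in `Acyc (Gctr)` -/
lemma Phi_mem (hadj : G.Adj u v) {r' : V → V → Prop}
    (hr' : r' ∈ Acyc (G.deleteEdges {s(u,v)}))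
    (hTuv : ¬ TransGen r' u v) (hTvu : ¬ TransGen r' v u) :
    Phi hadj.ne r' ∈ Acyc (Gctr G hadj.ne) := by
  obtain ⟨hor', hac'⟩ := hr'
  have hno := no_rdel_uv hor'
  have hstep1 : ∀ t : V, ¬ r' t t := by
    intro t hc
    exact (G.deleteEdges {s(u,v)}).loopless.irrefl t ((hor'.1 t t).2 (Or.inl hc))
  refine ⟨⟨?_, ?_⟩, contract_acyclic hadj.ne hac' hTuv hTvu⟩
  · intro a b
    rw [Gctr_adj_iff hadj]
    constructor
    · rintro ⟨⟨x, y, hAdj, hx, hy⟩, hne_ab⟩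
      rcases (hor'.1 x y).1 hAdj with h | h
      · exact Or.inl (Phi_of_step hadj hor' h hx hy)
      · exact Or.inr (Phi_of_step hadj hor' h hy hx)
    · intro hh
      have key : ∀ c d : {t : V // t ≠ v}, Phi hadj.ne r' c d →
          (∃ x y, (G.deleteEdges {s(u,v)}).Adj x y ∧ ctr hadj.ne x = c ∧ ctr hadj.ne y = d) := by
        intro c d hcd
        rcases hcd with h | ⟨hc, h⟩ | ⟨hd, h⟩
        · exact ⟨↑c, ↑d, (hor'.1 _ _).2 (Or.inl h), ctr_coe hadj.ne c, ctr_coe hadj.ne d⟩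
        · exact ⟨v, ↑d, (hor'.1 _ _).2 (Or.inl h), by rw [ctr_v, hc], ctr_coe hadj.ne d⟩
        · exact ⟨↑c, v, (hor'.1 _ _).2 (Or.inl h), ctr_coe hadj.ne c, by rw [ctr_v, hd]⟩
      have hne_ab : a ≠ b := by
        rintro rfl
        rcases hh with hh | hh <;>
        · rcases hh with h | ⟨ha, h⟩ | ⟨ha, h⟩
          · exact hstep1 _ h
          · rw [ha] at h; exact hno.2 h
          · rw [ha] at h; exact hno.1 h
      rcases hh with hh | hh
      · exact ⟨key a b hh, hne_ab⟩
      · obtain ⟨x, y, hAdj, hx, hy⟩ := key b a hh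
        exact ⟨⟨y, x, hAdj.symm, hy, hx⟩, hne_ab⟩
  · -- asymmetry
    rintro a b (h1 | ⟨ha, h1⟩ | ⟨hb, h1⟩) (h2 | ⟨hb', h2⟩ | ⟨ha', h2⟩)
    · exact hor'.2 _ _ h1 h2
    · rw [hb'] at h1
      exact hTvu (TransGen.tail (TransGen.single h2) h1)
    · rw [ha'] at h1
      exact hTuv (TransGen.tail (TransGen.single h1) h2)
    · rw [ha] at h2
      exact hTvu (TransGen.tail (TransGen.single h1) h2)
    · rw [hb'] at h1
      exact hno.2 h1
    · exact hor'.2 _ _ h1 h2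
    · rw [hb] at h2
      exact hTuv (TransGen.tail (TransGen.single h2) h1)
    · exact hor'.2 _ _ h1 h2
    · rw [ha'] at h1
      exact hno.1 h1

/-- restriction of an orientation of the contracted graph -/
def Psi [DecidableEq V] {u v : V} (hne : u ≠ v) (Gd : SimpleGraph V)
    (t : {x : V // x ≠ v} → {x : V // x ≠ v} → Prop) : V → V → Prop :=
  fun x y => Gd.Adj x y ∧ t (ctr hne x) (ctr hne y)

lemma Psi_Phi (hadj : G.Adj u v) {r' : V → V → Prop}
    (hor' : IsOrientation (G.deleteEdges {s(u,v)}) r')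
    (hasym : ∀ a b, Phi hadj.ne r' a b → ¬ Phi hadj.ne r' b a) :
    Psi hadj.ne (G.deleteEdges {s(u,v)}) (Phi hadj.ne r') = r' := by
  funext x y
  apply propext
  constructor
  · rintro ⟨hAdj, hP⟩
    rcases (hor'.1 x y).1 hAdj with h | h
    · exact h
    · exact absurd hP (hasym _ _ (Phi_of_step hadj hor' h rfl rfl))
  · intro h
    exact ⟨(hor'.1 x y).2 (Or.inl h), Phi_of_step hadj hor' h rfl rfl⟩

lemma ctr_u (hne : u ≠ v) : ctr hne u = ⟨u, hne⟩ := ctr_of_ne hne hne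

lemma Psi_mem (hadj : G.Adj u v) {t : {x : V // x ≠ v} → {x : V // x ≠ v} → Prop}
    (ht : t ∈ Acyc (Gctr G hadj.ne)) :
    Psi hadj.ne (G.deleteEdges {s(u,v)}) t ∈ Acyc (G.deleteEdges {s(u,v)}) ∧
      ¬ TransGen (Psi hadj.ne (G.deleteEdges {s(u,v)}) t) u v ∧
      ¬ TransGen (Psi hadj.ne (G.deleteEdges {s(u,v)}) t) v u := by
  obtain ⟨hort, hact⟩ := ht
  have hctr_adj : ∀ x y, (G.deleteEdges {s(u,v)}).Adj x y →
      (Gctr G hadj.ne).Adj (ctr hadj.ne x) (ctr hadj.ne y) := by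
    intro x y hAdj
    rw [Gctr_adj_iff hadj]
    refine ⟨⟨x, y, hAdj, rfl, rfl⟩, ?_⟩
    intro hc
    rcases ctr_eq_cases hadj.ne hc with heq | ⟨hx, hy⟩ | ⟨hx, hy⟩
    · exact (G.deleteEdges {s(u,v)}).loopless.irrefl x (heq ▸ hAdj)
    · rw [hx, hy, deleteEdges_adj] at hAdj
      exact hAdj.2 rfl
    · rw [hx, hy, deleteEdges_adj] at hAdj
      exact hAdj.2 (Sym2.eq_swap)
  have hlift : ∀ x y, TransGen (Psi hadj.ne (G.deleteEdges {s(u,v)}) t) x y →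
      TransGen t (ctr hadj.ne x) (ctr hadj.ne y) :=
    fun x y h => TransGen.lift (ctr hadj.ne) (fun i j hij => hij.2) _ _ h
  refine ⟨⟨⟨?_, ?_⟩, ?_⟩, ?_, ?_⟩
  · intro i j
    constructor
    · intro hAdj
      rcases (hort.1 _ _).1 (hctr_adj i j hAdj) with h | h
      · exact Or.inl ⟨hAdj, h⟩
      · exact Or.inr ⟨hAdj.symm, h⟩
    · rintro (⟨hAdj, _⟩ | ⟨hAdj, _⟩)
      · exact hAdj
      · exact hAdj.symm
  · rintro i j ⟨_, h1⟩ ⟨_, h2⟩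
    exact hort.2 _ _ h1 h2
  · intro x hx
    exact hact _ (hlift x x hx)
  · intro hT
    have := hlift _ _ hT
    rw [ctr_u hadj.ne, ctr_v] at this
    exact hact _ this
  · intro hT
    have := hlift _ _ hT
    rw [ctr_u hadj.ne, ctr_v] at this
    exact hact _ this

lemma Phi_Psi (hadj : G.Adj u v) {t : {x : V // x ≠ v} → {x : V // x ≠ v} → Prop}
    (ht : t ∈ Acyc (Gctr G hadj.ne)) :
    Phi hadj.ne (Psi hadj.ne (G.deleteEdges {s(u,v)}) t) = t := by
  obtain ⟨hort, hact⟩ := ht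
  funext a b
  apply propext
  constructor
  · rintro (⟨_, h⟩ | ⟨ha, _, h⟩ | ⟨hb, _, h⟩)
    · rwa [ctr_coe, ctr_coe] at h
    · rw [ctr_v, ctr_coe, ← ha] at h
      exact h
    · rw [ctr_coe, ctr_v, ← hb] at h
      exact h
  · intro hab
    have hAdj : (Gctr G hadj.ne).Adj a b := (hort.1 a b).2 (Or.inl hab)
    rw [Gctr_adj_iff hadj] at hAdj
    obtain ⟨⟨x, y, hAdj, hx, hy⟩, hne_ab⟩ := hAdj
    by_cases hxv : x = v
    · have hyv : y ≠ v := by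
        intro hc
        rw [hxv, hc] at hAdj
        exact (G.deleteEdges {s(u,v)}).loopless.irrefl v hAdj
      right; left
      rw [hxv] at hAdj
      rw [hxv, ctr_v] at hx
      refine ⟨hx.symm, ?_⟩
      have hby : (↑b : V) = y := by rw [← hy, ctr_of_ne hadj.ne hyv]
      refine ⟨?_, ?_⟩
      · rw [hby]; exact hAdj
      · rw [ctr_v, hby, hy, hx]
        exact hab
    · by_cases hyv : y = v
      · right; right
        rw [hyv] at hAdj
        rw [hyv, ctr_v] at hy
        refine ⟨hy.symm, ?_⟩
        have hax : (↑a : V) = x := by rw [← hx, ctr_of_ne hadj.ne hxv]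
        refine ⟨?_, ?_⟩
        · rw [hax]; exact hAdj
        · rw [ctr_v, hax, hx, hy]
          exact hab
      · left
        have hax : (↑a : V) = x := by rw [← hx, ctr_of_ne hadj.ne hxv]
        have hby : (↑b : V) = y := by rw [← hy, ctr_of_ne hadj.ne hyv]
        refine ⟨by rw [hax, hby]; exact hAdj, ?_⟩
        rw [hax, hby, hx, hy]
        exact hab

/-- the contraction bijection on the level of cardinalities -/
lemma ncard_B_eq (hadj : G.Adj u v) :
    {r' | r' ∈ Acyc (G.deleteEdges {s(u,v)}) ∧ ¬ TransGen r' u v ∧ ¬ TransGen r' v u}.ncard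
      = (Acyc (Gctr G hadj.ne)).ncard := by
  have himg : (Phi hadj.ne) ''
      {r' | r' ∈ Acyc (G.deleteEdges {s(u,v)}) ∧ ¬ TransGen r' u v ∧ ¬ TransGen r' v u}
      = Acyc (Gctr G hadj.ne) := by
    ext t
    constructor
    · rintro ⟨r', ⟨hr', hTuv, hTvu⟩, rfl⟩
      exact Phi_mem hadj hr' hTuv hTvu
    · intro ht
      refine ⟨Psi hadj.ne (G.deleteEdges {s(u,v)}) t, ?_, Phi_Psi hadj ht⟩
      obtain ⟨h1, h2, h3⟩ := Psi_mem hadj ht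
      exact ⟨h1, h2, h3⟩
  have hinj : Set.InjOn (Phi hadj.ne)
      {r' | r' ∈ Acyc (G.deleteEdges {s(u,v)}) ∧ ¬ TransGen r' u v ∧ ¬ TransGen r' v u} := by
    intro r₁ h₁ r₂ h₂ heq
    have e₁ : Phi hadj.ne r₁ ∈ Acyc (Gctr G hadj.ne) := Phi_mem hadj h₁.1 h₁.2.1 h₁.2.2
    have e₂ : Phi hadj.ne r₂ ∈ Acyc (Gctr G hadj.ne) := Phi_mem hadj h₂.1 h₂.2.1 h₂.2.2
    calc r₁ = Psi hadj.ne (G.deleteEdges {s(u,v)}) (Phi hadj.ne r₁) :=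
          (Psi_Phi hadj h₁.1.1 (fun a b => e₁.1.2 a b)).symm
      _ = Psi hadj.ne (G.deleteEdges {s(u,v)}) (Phi hadj.ne r₂) := by rw [heq]
      _ = r₂ := Psi_Phi hadj h₂.1.1 (fun a b => e₂.1.2 a b)
  rw [← himg, Set.ncard_image_of_injOn hinj]

end Ctr

end Orients


section AlphaRec
open Part5b
variable {V : Type*}

lemma acyc_rec [Fintype V] [DecidableEq V] (G : SimpleGraph V) {u v : V} (hadj : G.Adj u v) :
    (Acyc G).ncard = (Acyc (G.deleteEdges {s(u,v)})).ncard + (Acyc (Gctr G hadj.ne)).ncard := by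
  classical
  have hsplit : (Acyc G).ncard
      = {r | r ∈ Acyc G ∧ r u v}.ncard + {r | r ∈ Acyc G ∧ r v u}.ncard := by
    conv_lhs => rw [acyc_split hadj]
    exact Set.ncard_union_eq (acyc_split_disj (G := G) (u := u) (v := v))
      (Set.toFinite _) (Set.toFinite _)
  have h1 := ncard_A_eq hadj
  have h2 := ncard_A_eq hadj.symm
  rw [show s(v,u) = s(u,v) from Sym2.eq_swap] at h2
  have hiu : {r' | r' ∈ Acyc (G.deleteEdges {s(u,v)}) ∧ ¬ Relation.TransGen r' v u}
      ∩ {r' | r' ∈ Acyc (G.deleteEdges {s(u,v)}) ∧ ¬ Relation.TransGen r' u v}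
      = {r' | r' ∈ Acyc (G.deleteEdges {s(u,v)}) ∧ ¬ Relation.TransGen r' u v ∧ ¬ Relation.TransGen r' v u} := by
    ext r'
    simp only [Set.mem_inter_iff, Set.mem_setOf_eq]
    tauto
  have hkey : ({r' | r' ∈ Acyc (G.deleteEdges {s(u,v)}) ∧ ¬ Relation.TransGen r' v u}
        ∩ {r' | r' ∈ Acyc (G.deleteEdges {s(u,v)}) ∧ ¬ Relation.TransGen r' u v}).ncard
      + ({r' | r' ∈ Acyc (G.deleteEdges {s(u,v)}) ∧ ¬ Relation.TransGen r' v u}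
        ∪ {r' | r' ∈ Acyc (G.deleteEdges {s(u,v)}) ∧ ¬ Relation.TransGen r' u v}).ncard
      = {r' | r' ∈ Acyc (G.deleteEdges {s(u,v)}) ∧ ¬ Relation.TransGen r' v u}.ncard
      + {r' | r' ∈ Acyc (G.deleteEdges {s(u,v)}) ∧ ¬ Relation.TransGen r' u v}.ncard :=
    Set.ncard_inter_add_ncard_union _ _ (Set.toFinite _) (Set.toFinite _)
  have e1 : ({r' | r' ∈ Acyc (G.deleteEdges {s(u,v)}) ∧ ¬ Relation.TransGen r' v u}
      ∩ {r' | r' ∈ Acyc (G.deleteEdges {s(u,v)}) ∧ ¬ Relation.TransGen r' u v}).ncard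
      = (Acyc (Gctr G hadj.ne)).ncard := by
    rw [hiu, ncard_B_eq hadj]
  have e2 : ({r' | r' ∈ Acyc (G.deleteEdges {s(u,v)}) ∧ ¬ Relation.TransGen r' v u}
      ∪ {r' | r' ∈ Acyc (G.deleteEdges {s(u,v)}) ∧ ¬ Relation.TransGen r' u v}).ncard
      = (Acyc (G.deleteEdges {s(u,v)})).ncard := by
    rw [C_union (G := G) (u := u) (v := v)]
  rw [hsplit, h1, h2, ← e1, ← e2]
  linarith [hkey]

lemma bot_rel_acyclic : IsAcyclicRel (fun (_ _ : V) => False) := by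
  intro x hx
  cases hx with
  | single h => exact h
  | tail _ h => exact h

lemma acyc_bot : (Acyc (⊥ : SimpleGraph V)).ncard = 1 := by
  have : Acyc (⊥ : SimpleGraph V) = {fun _ _ => False} := by
    ext r
    constructor
    · rintro ⟨hor, _⟩
      have : r = fun _ _ => False := by
        funext i j
        apply propext
        constructor
        · intro h
          exact (hor.1 i j).2 (Or.inl h)
        · intro h
          exact h.elim
      exact this
    · rintro rfl
      exact ⟨⟨fun i j => by simp, fun i j h => h.elim⟩, bot_rel_acyclic⟩
  rw [this, Set.ncard_singleton]

lemma ES_empty_iff_bot [Finite V] (G : SimpleGraph V) : ES G = ∅ ↔ G = ⊥ := by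
  rw [← SimpleGraph.edgeSet_eq_empty]
  constructor
  · intro h
    ext w
    rw [← mem_ES (G := G), h]
    simp
  · intro h
    ext w
    rw [mem_ES, h]
    simp

lemma dsum_bot [Fintype V] [DecidableEq V] : dsum (⊥ : SimpleGraph V) = 1 := by
  have hES : ES (⊥ : SimpleGraph V) = ∅ := (ES_empty_iff_bot _).2 rfl
  rw [dsum, hES, Finset.powerset_empty, Finset.sum_singleton]
  have : graphRank (↑(∅ : Finset (Sym2 V)) : Set (Sym2 V)) = 0 := by
    rw [Finset.coe_empty, graphRank_eq, nc_empty, Nat.sub_self]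
  rw [this]
  simp

lemma alpha_eq_dsum : ∀ (m : ℕ) {V : Type u} [Fintype V] [DecidableEq V] (G : SimpleGraph V),
    (ES G).card ≤ m → ((Acyc G).ncard : ℤ) = dsum G := by
  intro m
  induction m with
  | zero =>
    intro V _ _ G hG
    have hbot : G = ⊥ := (ES_empty_iff_bot G).1 (Finset.card_eq_zero.1 (Nat.le_zero.1 hG))
    subst hbot
    rw [acyc_bot, dsum_bot]
    norm_num
  | succ m ih =>
    intro V _ _ G hG
    by_cases hES : ES G = ∅
    · have hbot : G = ⊥ := (ES_empty_iff_bot G).1 hES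
      subst hbot
      rw [acyc_bot, dsum_bot]
      norm_num
    · obtain ⟨w, hw⟩ := Finset.nonempty_iff_ne_empty.2 hES
      induction w using Sym2.ind with
      | _ u v =>
      have hadj : G.Adj u v := G.mem_edgeSet.1 (mem_ES.1 hw)
      have hcard_del : (ES (G.deleteEdges {s(u,v)})).card ≤ m := by
        rw [ES_deleteEdges]
        have := Finset.card_erase_of_mem hw
        omega
      have hcard_ctr : (ES (Gctr G hadj.ne)).card ≤ m := by
        rw [ES_Gctr G hadj]
        calc (((ES G).erase s(u,v)).image (Sym2.map (ctr hadj.ne))).card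
            ≤ ((ES G).erase s(u,v)).card := Finset.card_image_le
          _ ≤ m := by
              have := Finset.card_erase_of_mem hw
              omega
      rw [acyc_rec G hadj, dsum_rec G hadj]
      push_cast
      rw [ih (G.deleteEdges {s(u,v)}) hcard_del, ih (Gctr G hadj.ne) hcard_ctr]

lemma ES_eq_edgeFinset [Fintype V] [DecidableEq V] (G : SimpleGraph V) [DecidableRel G.Adj] :
    ES G = G.edgeFinset := by
  ext w
  rw [mem_ES, SimpleGraph.mem_edgeFinset]

lemma tutte_two [Fintype V] [DecidableEq V] (G : SimpleGraph V) [DecidableRel G.Adj] :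
    tutte G 2 0 = dsum G := by
  rw [tutte, dsum, ← ES_eq_edgeFinset]
  refine Finset.sum_congr rfl fun A hA => ?_
  norm_num

lemma nc_edgeSet_of_connected [Fintype V] (G : SimpleGraph V) (hG : G.Connected) :
    nc G.edgeSet = 1 := by
  rw [nc, SimpleGraph.fromEdgeSet_edgeSet, Nat.card_eq_one_iff_unique]
  constructor
  · constructor
    rintro ⟨a⟩ ⟨b⟩
    exact SimpleGraph.ConnectedComponent.sound (hG.preconnected a b)
  · exact ⟨G.connectedComponentMk hG.nonempty.some⟩

lemma tutte_one [Fintype V] [DecidableEq V] (G : SimpleGraph V) [DecidableRel G.Adj]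
    (hG : G.Connected) : tutte G 1 0 = gsum G := by
  haveI : Nonempty V := hG.nonempty
  have hnc1 : nc G.edgeSet = 1 := nc_edgeSet_of_connected G hG
  rw [tutte, gsum, ← ES_eq_edgeFinset]
  refine Finset.sum_congr rfl fun A hA => ?_
  rw [Finset.mem_powerset] at hA
  have hsub : (↑A : Set (Sym2 V)) ⊆ G.edgeSet := by
    rw [← coe_ES G]
    exact Finset.coe_subset.2 hA
  have hmono : nc G.edgeSet ≤ nc (↑A : Set (Sym2 V)) := nc_mono hsub
  have h1A : 1 ≤ nc (↑A : Set (Sym2 V)) := one_le_nc _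
  have hAn : nc (↑A : Set (Sym2 V)) ≤ Fintype.card V := nc_le_card _
  have hn : 1 ≤ Fintype.card V := Fintype.card_pos
  rw [graphRank_eq G.edgeSet, graphRank_eq (↑A : Set (Sym2 V)), hnc1]
  by_cases hc : nc (↑A : Set (Sym2 V)) = 1
  · rw [if_pos hc, hc, Nat.sub_self, pow_zero, one_mul]
    norm_num
  · rw [if_neg hc]
    have hpos : Fintype.card V - 1 - (Fintype.card V - nc (↑A : Set (Sym2 V))) ≠ 0 := by
      omega
    have h0 : ((1:ℤ) - 1) = 0 := by norm_num
    rw [h0, zero_pow hpos, zero_mul]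
end AlphaRec


section BetaSide
variable {V : Type*}

/-- the set of sources of an orientation -/
def srcSet (r : V → V → Prop) : Set V := {x | IsSource r x}

lemma acyc_bot_set : Acyc (⊥ : SimpleGraph V) = {fun _ _ => False} := by
  ext r
  constructor
  · rintro ⟨hor, _⟩
    have : r = fun _ _ => False := by
      funext i j
      apply propext
      exact ⟨fun h => (hor.1 i j).2 (Or.inl h), fun h => h.elim⟩
    exact this
  · rintro rfl
    exact ⟨⟨fun i j => by simp, fun i j h => h.elim⟩, bot_rel_acyclic⟩

lemma srcSet_bot_rel : srcSet (fun (_ _ : V) => False) = Set.univ := by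
  ext x
  simp [srcSet, IsSource]

lemma beta_bot [Fintype V] [DecidableEq V] (q : V) :
    ({r | r ∈ Acyc (⊥ : SimpleGraph V) ∧ srcSet r = {q}}.ncard : ℤ)
      = gsum (⊥ : SimpleGraph V) := by
  have hES : ES (⊥ : SimpleGraph V) = ∅ := (ES_empty_iff_bot _).2 rfl
  have hg : gsum (⊥ : SimpleGraph V) = if Fintype.card V = 1 then 1 else 0 := by
    rw [gsum, hES, Finset.powerset_empty, Finset.sum_singleton]
    have h0 : graphRank (↑(∅ : Finset (Sym2 V)) : Set (Sym2 V)) = 0 := by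
      rw [Finset.coe_empty, graphRank_eq, nc_empty, Nat.sub_self]
    have h1 : nc (↑(∅ : Finset (Sym2 V)) : Set (Sym2 V)) = Fintype.card V := by
      rw [Finset.coe_empty, nc_empty]
    rw [h0, h1]
    by_cases hcard : Fintype.card V = 1 <;> simp [hcard]
  rw [hg]
  have hset : {r | r ∈ Acyc (⊥ : SimpleGraph V) ∧ srcSet r = {q}}
      = if Fintype.card V = 1 then {fun _ _ => False} else ∅ := by
    by_cases hcard : Fintype.card V = 1
    · rw [if_pos hcard]
      ext r
      simp only [Set.mem_setOf_eq, acyc_bot_set, Set.mem_singleton_iff]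
      constructor
      · rintro ⟨rfl, _⟩; rfl
      · rintro rfl
        refine ⟨rfl, ?_⟩
        rw [srcSet_bot_rel]
        have := Fintype.card_eq_one_iff.1 hcard
        obtain ⟨x, hx⟩ := this
        ext y
        simp only [Set.mem_univ, Set.mem_singleton_iff, true_iff]
        rw [hx y, hx q]
    · rw [if_neg hcard]
      ext r
      simp only [Set.mem_setOf_eq, acyc_bot_set, Set.mem_singleton_iff, Set.mem_empty_iff_false,
        iff_false, not_and]
      rintro rfl
      rw [srcSet_bot_rel]
      intro huniv
      apply hcard
      have : ∀ y : V, y = q := by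
        intro y
        have : y ∈ (Set.univ : Set V) := Set.mem_univ y
        rw [huniv] at this
        exact this
      rw [Fintype.card_eq_one_iff]
      exact ⟨q, this⟩
  rw [hset]
  by_cases hcard : Fintype.card V = 1 <;> simp [hcard]

/-- if the edge set is connected and there are ≥ 2 vertices, every vertex has an incident edge -/
lemma adj_of_conn [Fintype V] {A : Set (Sym2 V)} (hA : nc A = 1) (hcard : 2 ≤ Fintype.card V)
    (z : V) : ∃ y, s(z,y) ∈ A ∧ z ≠ y := by
  have hsub : Subsingleton (fromEdgeSet A).ConnectedComponent := by
    have hfin := cc_finite (fromEdgeSet A)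
    rw [nc] at hA
    exact (Nat.card_eq_one_iff_unique.1 hA).1
  obtain ⟨t, ht⟩ := Fintype.exists_ne_of_one_lt_card hcard z
  have hreach : (fromEdgeSet A).Reachable z t := by
    rw [← SimpleGraph.ConnectedComponent.eq]
    exact Subsingleton.elim _ _
  obtain ⟨p⟩ := hreach
  cases p with
  | nil => exact absurd rfl ht
  | @cons _ b _ h p =>
    rw [SimpleGraph.fromEdgeSet_adj] at h
    exact ⟨b, h.1, h.2⟩

end BetaSide


section Isolated
variable {V : Type*}

lemma transGen_first_step {r : V → V → Prop} {z x : V} (h : Relation.TransGen r z x) :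
    ∃ w, r z w := by
  induction h with
  | single h => exact ⟨_, h⟩
  | tail _ _ ih => exact ih

lemma two_le_card_of_edge [Fintype V] {G : SimpleGraph V} (h : ES G ≠ ∅) :
    2 ≤ Fintype.card V := by
  obtain ⟨w, hw⟩ := Finset.nonempty_iff_ne_empty.2 h
  induction w using Sym2.ind with
  | _ x y =>
  have hadj : G.Adj x y := G.mem_edgeSet.1 (mem_ES.1 hw)
  have : 1 < Fintype.card V := Fintype.one_lt_card_iff.2 ⟨x, y, hadj.ne⟩
  omega

lemma gsum_zero_of_isolated [Fintype V] [DecidableEq V] (G : SimpleGraph V) {q : V}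
    (hq : ∀ y, ¬ G.Adj q y) (hedge : ES G ≠ ∅) : gsum G = 0 := by
  rw [gsum]
  refine Finset.sum_eq_zero fun A hA => ?_
  rw [Finset.mem_powerset] at hA
  rw [if_neg]
  intro hc
  obtain ⟨y, hmem, hney⟩ := adj_of_conn hc (two_le_card_of_edge hedge) q
  have : s(q,y) ∈ G.edgeSet := by
    rw [← coe_ES G]
    exact Finset.coe_subset.2 hA hmem
  exact hq y (G.mem_edgeSet.1 this)

lemma beta_zero_of_isolated [Finite V] (G : SimpleGraph V) {q : V}
    (hq : ∀ y, ¬ G.Adj q y) {x y : V} (hadj : G.Adj x y) :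
    {r | r ∈ Acyc G ∧ srcSet r = {q}} = ∅ := by
  ext r
  simp only [Set.mem_setOf_eq, Set.mem_empty_iff_false, iff_false, not_and]
  intro hr hsrc
  obtain ⟨z, hzsrc, hz⟩ := exists_source hr.2 x
  have hzq : z = q := by
    have : z ∈ srcSet r := hzsrc
    rw [hsrc] at this
    exact this
  subst hzq
  rcases hz with rfl | hT
  · rcases (hr.1.1 z y).1 hadj with h | h
    · exact hq y ((hr.1.1 z y).2 (Or.inl h))
    · exact hq y ((hr.1.1 z y).2 (Or.inr h))
  · obtain ⟨w, hw⟩ := transGen_first_step hT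
    exact hq w ((hr.1.1 z w).2 (Or.inl hw))

end Isolated


section BetaRec
open Relation
variable {V : Type*} [Fintype V] [DecidableEq V] {G : SimpleGraph V} {q v : V}

lemma mem_srcSet_iff {r : V → V → Prop} {x : V} : x ∈ srcSet r ↔ IsSource r x := Iff.rfl

lemma src_of_singleton {r : V → V → Prop} (hsrc : srcSet r = {q}) : IsSource r q := by
  have : q ∈ srcSet r := by rw [hsrc]; rfl
  exact this

lemma X_rqv (hadj : G.Adj q v) {r : V → V → Prop} (hr : r ∈ Acyc G)
    (hsrc : srcSet r = {q}) : r q v := by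
  rcases (hr.1.1 q v).1 hadj with h | h
  · exact h
  · exact absurd h (src_of_singleton hsrc v)

lemma rese_source {r : V → V → Prop} {e : Sym2 V} {x : V} (h : IsSource r x) :
    IsSource (rese e r) x := fun j hj => h j hj.1

lemma rese_source_rev (hadj : G.Adj q v) {r : V → V → Prop} (hr : r ∈ Acyc G)
    (hsrc : srcSet r = {q}) {x : V} (hx : x ≠ v)
    (h : IsSource (rese s(q,v) r) x) : IsSource r x := by
  intro j hj
  by_cases he : s(j,x) = s(q,v)
  · rw [Sym2.eq_iff] at he
    rcases he with ⟨hjq, hxv⟩ | ⟨hjv, hxq⟩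
    · exact hx hxv
    · rw [hjv, hxq] at hj
      exact hr.1.2 q v (X_rqv hadj hr hsrc) hj
  · exact h j ⟨hj, he⟩

/-- the X₁ bijection -/
lemma X1_image (hadj : G.Adj q v) :
    (rese s(q,v)) '' {r | (r ∈ Acyc G ∧ srcSet r = {q}) ∧ ¬ IsSource (rese s(q,v) r) v}
      = {r' | r' ∈ Acyc (G.deleteEdges {s(q,v)}) ∧ srcSet r' = {q}} := by
  ext r'
  constructor
  · rintro ⟨r, ⟨⟨hr, hsrc⟩, hcond⟩, rfl⟩
    refine ⟨⟨rese_orientation hadj hr.1,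
      fun x hx => hr.2 x (TransGen.mono (fun i j hij => hij.1) _ _ hx)⟩, ?_⟩
    ext x
    simp only [mem_srcSet_iff, Set.mem_singleton_iff]
    constructor
    · intro hxsrc
      by_cases hxv : x = v
      · exact absurd (hxv ▸ hxsrc) hcond
      · have : x ∈ srcSet r := rese_source_rev hadj hr hsrc hxv hxsrc
        rw [hsrc] at this
        exact this
    · rintro rfl
      exact rese_source (src_of_singleton hsrc)
  · rintro ⟨hr', hsrc'⟩
    have hq' : IsSource r' q := src_of_singleton hsrc'
    have hor := exte_orientation hadj hr'.1
    have hmemG : exte q v r' ∈ Acyc G :=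
      ⟨hor, isAcyclicRel_exte hr'.2 hadj.ne (not_transGen_to_source hq' v)⟩
    have hsrcG : srcSet (exte q v r') = {q} := by
      ext x
      simp only [mem_srcSet_iff, Set.mem_singleton_iff]
      constructor
      · intro hxsrc
        have : IsSource r' x := fun j hj => hxsrc j (Or.inl hj)
        have : x ∈ srcSet r' := this
        rw [hsrc'] at this
        exact this
      · rintro rfl
        rintro j (hj | ⟨hjq, hqv⟩)
        · exact hq' j hj
        · exact hadj.ne hqv
    refine ⟨exte q v r', ⟨⟨hmemG, hsrcG⟩, ?_⟩, rese_exte hr'.1⟩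
    rw [rese_exte hr'.1]
    intro hvs
    have : v ∈ srcSet r' := hvs
    rw [hsrc'] at this
    exact hadj.ne this.symm

lemma X1_injOn (hadj : G.Adj q v) :
    Set.InjOn (rese s(q,v)) {r | (r ∈ Acyc G ∧ srcSet r = {q}) ∧ ¬ IsSource (rese s(q,v) r) v} := by
  refine Set.InjOn.mono ?_ (Part5b.A1_injOn (G := G) (u := q) (v := v))
  rintro r ⟨⟨hr, hsrc⟩, _⟩
  exact ⟨hr, X_rqv hadj hr hsrc⟩

/-- the X₂-to-middle bijection -/
lemma X2_image (hadj : G.Adj q v) :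
    (rese s(q,v)) '' {r | (r ∈ Acyc G ∧ srcSet r = {q}) ∧ IsSource (rese s(q,v) r) v}
      = {r' | r' ∈ Acyc (G.deleteEdges {s(q,v)}) ∧ srcSet r' = {q, v}} := by
  ext r'
  constructor
  · rintro ⟨r, ⟨⟨hr, hsrc⟩, hcond⟩, rfl⟩
    refine ⟨⟨rese_orientation hadj hr.1,
      fun x hx => hr.2 x (TransGen.mono (fun i j hij => hij.1) _ _ hx)⟩, ?_⟩
    ext x
    simp only [mem_srcSet_iff, Set.mem_insert_iff, Set.mem_singleton_iff]
    constructor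
    · intro hxsrc
      by_cases hxv : x = v
      · exact Or.inr hxv
      · have : x ∈ srcSet r := rese_source_rev hadj hr hsrc hxv hxsrc
        rw [hsrc] at this
        exact Or.inl this
    · rintro (rfl | rfl)
      · exact rese_source (src_of_singleton hsrc)
      · exact hcond
  · rintro ⟨hr', hsrc'⟩
    have hq' : IsSource r' q := by
      have : q ∈ srcSet r' := by rw [hsrc']; exact Or.inl rfl
      exact this
    have hv' : IsSource r' v := by
      have : v ∈ srcSet r' := by rw [hsrc']; exact Or.inr rfl
      exact this
    have hor := exte_orientation hadj hr'.1
    have hmemG : exte q v r' ∈ Acyc G :=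
      ⟨hor, isAcyclicRel_exte hr'.2 hadj.ne (not_transGen_to_source hq' v)⟩
    have hsrcG : srcSet (exte q v r') = {q} := by
      ext x
      simp only [mem_srcSet_iff, Set.mem_singleton_iff]
      constructor
      · intro hxsrc
        have hx' : x ∈ srcSet r' := fun j hj => hxsrc j (Or.inl hj)
        rw [hsrc'] at hx'
        rcases hx' with rfl | rfl
        · rfl
        · exact absurd (Or.inr ⟨rfl, rfl⟩) (hxsrc q)
      · rintro rfl
        rintro j (hj | ⟨hjq, hqv⟩)
        · exact hq' j hj
        · exact hadj.ne hqv
    refine ⟨exte q v r', ⟨⟨hmemG, hsrcG⟩, ?_⟩, rese_exte hr'.1⟩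
    rw [rese_exte hr'.1]
    exact hv'

end BetaRec


section BetaRec2
open Relation
variable {V : Type*} [Fintype V] [DecidableEq V] {G : SimpleGraph V} {q v : V}

lemma B2_image (hadj : G.Adj q v) :
    (Phi hadj.ne) '' {r' | r' ∈ Acyc (G.deleteEdges {s(q,v)}) ∧ srcSet r' = {q, v}}
      = {t | t ∈ Acyc (Gctr G hadj.ne) ∧ srcSet t = {(⟨q, hadj.ne⟩ : {x : V // x ≠ v})}} := by
  ext t
  constructor
  · rintro ⟨r', ⟨hr', hsrc'⟩, rfl⟩
    have hq' : IsSource r' q := by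
      have : q ∈ srcSet r' := by rw [hsrc']; exact Or.inl rfl
      exact this
    have hv' : IsSource r' v := by
      have : v ∈ srcSet r' := by rw [hsrc']; exact Or.inr rfl
      exact this
    have hTqv : ¬ TransGen r' q v := not_transGen_to_source hv' q
    have hTvq : ¬ TransGen r' v q := not_transGen_to_source hq' v
    refine ⟨Phi_mem hadj hr' hTqv hTvq, ?_⟩
    ext a
    simp only [mem_srcSet_iff, Set.mem_singleton_iff]
    constructor
    · intro hasrc
      by_contra hne_a
      have haq : (↑a : V) ≠ q := by
        intro hc
        exact hne_a (Subtype.ext hc)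
      have hnotsrc : ¬ IsSource r' ↑a := by
        intro hsrc_a
        have : (↑a : V) ∈ srcSet r' := hsrc_a
        rw [hsrc'] at this
        rcases this with h | h
        · exact haq h
        · exact a.2 h
      obtain ⟨j, hj⟩ := not_forall.1 hnotsrc
      rw [not_not] at hj
      have hPhi : Phi hadj.ne r' (ctr hadj.ne j) a := by
        have := Phi_of_step hadj hr'.1 hj (rfl : ctr hadj.ne j = ctr hadj.ne j)
          (ctr_coe hadj.ne a)
        exact this
      exact hasrc _ hPhi
    · rintro rfl
      rintro b (hb | ⟨hbq, hb⟩ | ⟨hqq, hb⟩)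
      · exact hq' _ hb
      · exact hq' _ hb
      · exact hv' _ hb
  · rintro ⟨ht, hsrct⟩
    have hqq_src : IsSource t ⟨q, hadj.ne⟩ := src_of_singleton hsrct
    obtain ⟨hr'mem, hTqv, hTvq⟩ := Psi_mem hadj ht
    refine ⟨Psi hadj.ne (G.deleteEdges {s(q,v)}) t, ⟨hr'mem, ?_⟩, Phi_Psi hadj ht⟩
    ext x
    simp only [mem_srcSet_iff, Set.mem_insert_iff, Set.mem_singleton_iff]
    constructor
    · intro hxsrc
      by_contra hc
      push_neg at hc
      obtain ⟨hxq, hxv⟩ := hc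
      have hctr : ctr hadj.ne x = ⟨x, hxv⟩ := ctr_of_ne hadj.ne hxv
      have hctr_ne : ctr hadj.ne x ≠ ⟨q, hadj.ne⟩ := by
        rw [hctr]
        intro hcc
        exact hxq (by simpa using congrArg Subtype.val hcc)
      have hnotsrc : ¬ IsSource t (ctr hadj.ne x) := by
        intro hsrc_t
        have : ctr hadj.ne x ∈ srcSet t := hsrc_t
        rw [hsrct] at this
        exact hctr_ne this
      obtain ⟨b, hb⟩ := not_forall.1 hnotsrc
      rw [not_not] at hb
      have hAdj : (Gctr G hadj.ne).Adj b (ctr hadj.ne x) := (ht.1.1 _ _).2 (Or.inl hb)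
      rw [Gctr_adj_iff hadj] at hAdj
      obtain ⟨⟨j, y, hAdjd, hj, hy⟩, _⟩ := hAdj
      have hyx : y = x := by
        rcases ctr_eq_cases hadj.ne hy with h | ⟨h1, h2⟩ | ⟨h1, h2⟩
        · exact h
        · exact absurd h2 hxv
        · exact absurd h2 hxq
      refine hxsrc j ⟨?_, ?_⟩
      · rw [← hyx]; exact hAdjd
      · rw [hj]; exact hb
    · rintro (rfl | rfl)
      · rintro j ⟨_, hj⟩
        rw [ctr_u hadj.ne] at hj
        exact hqq_src _ hj
      · rintro j ⟨_, hj⟩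
        rw [ctr_v hadj.ne] at hj
        exact hqq_src _ hj

lemma B2_injOn (hadj : G.Adj q v) :
    Set.InjOn (Phi hadj.ne) {r' | r' ∈ Acyc (G.deleteEdges {s(q,v)}) ∧ srcSet r' = {q, v}} := by
  intro r₁ h₁ r₂ h₂ heq
  have hsrcs : ∀ (r' : V → V → Prop), r' ∈ Acyc (G.deleteEdges {s(q,v)}) → srcSet r' = {q, v} →
      r' ∈ Acyc (G.deleteEdges {s(q,v)}) ∧ ¬ TransGen r' q v ∧ ¬ TransGen r' v q := by
    intro r' hr' hsrc'
    have hq' : IsSource r' q := by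
      have : q ∈ srcSet r' := by rw [hsrc']; exact Or.inl rfl
      exact this
    have hv' : IsSource r' v := by
      have : v ∈ srcSet r' := by rw [hsrc']; exact Or.inr rfl
      exact this
    exact ⟨hr', not_transGen_to_source hv' q, not_transGen_to_source hq' v⟩
  obtain ⟨hm₁, hTqv₁, hTvq₁⟩ := hsrcs r₁ h₁.1 h₁.2
  obtain ⟨hm₂, hTqv₂, hTvq₂⟩ := hsrcs r₂ h₂.1 h₂.2
  have e₁ := Phi_mem hadj hm₁ hTqv₁ hTvq₁
  have e₂ := Phi_mem hadj hm₂ hTqv₂ hTvq₂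
  calc r₁ = Psi hadj.ne (G.deleteEdges {s(q,v)}) (Phi hadj.ne r₁) :=
        (Psi_Phi hadj hm₁.1 (fun a b => e₁.1.2 a b)).symm
    _ = Psi hadj.ne (G.deleteEdges {s(q,v)}) (Phi hadj.ne r₂) := by rw [heq]
    _ = r₂ := Psi_Phi hadj hm₂.1 (fun a b => e₂.1.2 a b)

/-- deletion–contraction for the unique-source count -/
lemma beta_rec (hadj : G.Adj q v) :
    {r | r ∈ Acyc G ∧ srcSet r = {q}}.ncard
      = {r' | r' ∈ Acyc (G.deleteEdges {s(q,v)}) ∧ srcSet r' = {q}}.ncard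
        + {t | t ∈ Acyc (Gctr G hadj.ne) ∧ srcSet t = {(⟨q, hadj.ne⟩ : {x : V // x ≠ v})}}.ncard := by
  have hsplit : {r | r ∈ Acyc G ∧ srcSet r = {q}}
      = {r | (r ∈ Acyc G ∧ srcSet r = {q}) ∧ ¬ IsSource (rese s(q,v) r) v}
        ∪ {r | (r ∈ Acyc G ∧ srcSet r = {q}) ∧ IsSource (rese s(q,v) r) v} := by
    ext r
    simp only [Set.mem_union, Set.mem_setOf_eq]
    tauto
  have hdisj : Disjoint {r | (r ∈ Acyc G ∧ srcSet r = {q}) ∧ ¬ IsSource (rese s(q,v) r) v}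
      {r | (r ∈ Acyc G ∧ srcSet r = {q}) ∧ IsSource (rese s(q,v) r) v} := by
    rw [Set.disjoint_left]
    rintro r ⟨_, h1⟩ ⟨_, h2⟩
    exact h1 h2
  have hcard : {r | r ∈ Acyc G ∧ srcSet r = {q}}.ncard
      = {r | (r ∈ Acyc G ∧ srcSet r = {q}) ∧ ¬ IsSource (rese s(q,v) r) v}.ncard
        + {r | (r ∈ Acyc G ∧ srcSet r = {q}) ∧ IsSource (rese s(q,v) r) v}.ncard := by
    conv_lhs => rw [hsplit]
    exact Set.ncard_union_eq hdisj (Set.toFinite _) (Set.toFinite _)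
  have h1 : {r' | r' ∈ Acyc (G.deleteEdges {s(q,v)}) ∧ srcSet r' = {q}}.ncard
      = {r | (r ∈ Acyc G ∧ srcSet r = {q}) ∧ ¬ IsSource (rese s(q,v) r) v}.ncard := by
    rw [← X1_image hadj, Set.ncard_image_of_injOn (X1_injOn hadj)]
  have hmid : {r' | r' ∈ Acyc (G.deleteEdges {s(q,v)}) ∧ srcSet r' = {q, v}}.ncard
      = {r | (r ∈ Acyc G ∧ srcSet r = {q}) ∧ IsSource (rese s(q,v) r) v}.ncard := by
    rw [← X2_image hadj, Set.ncard_image_of_injOn ?_]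
    · refine Set.InjOn.mono ?_ (Part5b.A1_injOn (G := G) (u := q) (v := v))
      rintro r ⟨⟨hr, hsrc⟩, _⟩
      exact ⟨hr, X_rqv hadj hr hsrc⟩
  have h2 : {t | t ∈ Acyc (Gctr G hadj.ne) ∧ srcSet t = {(⟨q, hadj.ne⟩ : {x : V // x ≠ v})}}.ncard
      = {r' | r' ∈ Acyc (G.deleteEdges {s(q,v)}) ∧ srcSet r' = {q, v}}.ncard := by
    rw [← B2_image hadj, Set.ncard_image_of_injOn (B2_injOn hadj)]
  rw [hcard, h1, h2, hmid]

end BetaRec2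


lemma beta_eq_gsum : ∀ (m : ℕ) {V : Type u} [Fintype V] [DecidableEq V] (G : SimpleGraph V),
    (ES G).card ≤ m → ∀ q : V,
    ({r | r ∈ Acyc G ∧ srcSet r = {q}}.ncard : ℤ) = gsum G := by
  intro m
  induction m with
  | zero =>
    intro V _ _ G hG q
    have hbot : G = ⊥ := (ES_empty_iff_bot G).1 (Finset.card_eq_zero.1 (Nat.le_zero.1 hG))
    subst hbot
    exact beta_bot q
  | succ m ih =>
    intro V _ _ G hG q
    by_cases hES : ES G = ∅
    · have hbot : G = ⊥ := (ES_empty_iff_bot G).1 hES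
      subst hbot
      exact beta_bot q
    · by_cases hq : ∃ y, G.Adj q y
      · obtain ⟨v, hadj⟩ := hq
        have hw : s(q,v) ∈ ES G := mem_ES.2 (G.mem_edgeSet.2 hadj)
        have hcard_del : (ES (G.deleteEdges {s(q,v)})).card ≤ m := by
          rw [ES_deleteEdges]
          have := Finset.card_erase_of_mem hw
          omega
        have hcard_ctr : (ES (Gctr G hadj.ne)).card ≤ m := by
          rw [ES_Gctr G hadj]
          calc (((ES G).erase s(q,v)).image (Sym2.map (ctr hadj.ne))).card
              ≤ ((ES G).erase s(q,v)).card := Finset.card_image_le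
            _ ≤ m := by
                have := Finset.card_erase_of_mem hw
                omega
        rw [beta_rec hadj, gsum_rec G hadj]
        push_cast
        rw [ih (G.deleteEdges {s(q,v)}) hcard_del q,
          ih (Gctr G hadj.ne) hcard_ctr (⟨q, hadj.ne⟩ : {x : V // x ≠ v})]
      · push_neg at hq
        obtain ⟨w, hwmem⟩ := Finset.nonempty_iff_ne_empty.2 hES
        induction w using Sym2.ind with
        | _ x y =>
        have hadj : G.Adj x y := G.mem_edgeSet.1 (mem_ES.1 hwmem)
        rw [gsum_zero_of_isolated G hq hES, beta_zero_of_isolated G hq hadj]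
        simp

/-- for a connected graph Y on n vertices, n·T_Y(1,0) ≤ T_Y(2,0). -/
theorem card_mul_tutte_le {V : Type*} [Fintype V] [DecidableEq V]
    (Y : SimpleGraph V) [DecidableRel Y.Adj] (hY : Y.Connected) :
    (Fintype.card V : ℤ) * tutte Y 1 0 ≤ tutte Y 2 0 := by
  classical
  have hα : ((Acyc Y).ncard : ℤ) = dsum Y := alpha_eq_dsum (ES Y).card Y le_rfl
  have hβ : ∀ q : V, ({r | r ∈ Acyc Y ∧ srcSet r = {q}}.ncard : ℤ) = gsum Y :=
    fun q => beta_eq_gsum (ES Y).card Y le_rfl q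
  have key : ∀ (t : Finset V), (∑ q ∈ t, {r | r ∈ Acyc Y ∧ srcSet r = {q}}.ncard)
      = (⋃ q ∈ (t : Set V), {r | r ∈ Acyc Y ∧ srcSet r = {q}}).ncard := by
    intro t
    induction t using Finset.induction_on with
    | empty => simp
    | @insert a t ha ih =>
      rw [Finset.sum_insert ha, ih]
      rw [Finset.coe_insert, Set.biUnion_insert]
      rw [Set.ncard_union_eq ?_ (Set.toFinite _) (Set.toFinite _)]
      rw [Set.disjoint_left]
      rintro r ⟨hr, hsrc⟩ hmem
      simp only [Set.mem_iUnion] at hmem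
      obtain ⟨b, hb, _, hsrc'⟩ := hmem
      have hab : a = b := Set.singleton_eq_singleton_iff.1 (hsrc.symm.trans hsrc')
      exact ha (hab ▸ hb)
  have hsum : (∑ q ∈ Finset.univ, {r | r ∈ Acyc Y ∧ srcSet r = {q}}.ncard) ≤ (Acyc Y).ncard := by
    rw [key Finset.univ]
    refine Set.ncard_le_ncard ?_ (Set.toFinite _)
    intro r hr
    simp only [Set.mem_iUnion] at hr
    obtain ⟨_, _, hq, _⟩ := hr
    exact hq
  calc (Fintype.card V : ℤ) * tutte Y 1 0
      = ∑ q ∈ Finset.univ, (({r | r ∈ Acyc Y ∧ srcSet r = {q}}).ncard : ℤ) := by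
        rw [tutte_one Y hY]
        rw [Finset.sum_congr rfl (fun q _ => hβ q), Finset.sum_const, Finset.card_univ,
          nsmul_eq_mul]
    _ = ((∑ q ∈ Finset.univ, {r | r ∈ Acyc Y ∧ srcSet r = {q}}.ncard : ℕ) : ℤ) := by
        push_cast
        rfl
    _ ≤ ((Acyc Y).ncard : ℤ) := by exact_mod_cast hsum
    _ = dsum Y := hα
    _ = tutte Y 2 0 := (tutte_two Y).symm

end AcycPaper
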